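/- arXiv:1010.4620 — 3 statements merged into one kernel-verified Lean document; each statement's English description precedes it below -/
import Mathlib

section
/- Let (N,h) be a pseudo-Riemannian manifold with a parallel symmetric 2-tensor S whose endomorphism satisfies S̃² = 0. On M := ℝ × N define g = -ds² + e^{2s}(h - S) + S. Then g is a pseudo-Riemannian metric (nondegenerate) and the cone (M̂, ĝ) over (M,g) admits a nontrivial parallel symmetric 2-tensor T with T̃² = 0, whose associated Obata function is α(s,n) = e^{2s}. -/
noncomputable section

/-- Covariant derivative of the vector field `Y` along `X`, for the connection
with Christoffel symbols `Γ` (chart presentation of a pseudo-Riemannian manifold):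
`(D_X Y)(p) = dY_p(X(p)) + Γ_p(X(p), Y(p))`. -/
def covVF {E : Type*} [NormedAddCommGroup E] [NormedSpace ℝ E]
    (Γ : E → E → E → E) (X Y : E → E) : E → E :=
  fun p => fderiv ℝ Y p (X p) + Γ p (X p) (Y p)

/-- `g` is pointwise a symmetric bilinear form (a pseudo-Riemannian metric in a chart). -/
def IsMetric {E : Type*} [NormedAddCommGroup E] [NormedSpace ℝ E]
    (g : E → E → E → ℝ) : Prop :=
  ∀ x, (∀ u, IsLinearMap ℝ (g x u)) ∧ (∀ v, IsLinearMap ℝ (fun u => g x u v)) ∧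
    (∀ u v, g x u v = g x v u)

/-- `g` is nondegenerate at every point of `s`. -/
def Nondeg {E : Type*} [NormedAddCommGroup E] [NormedSpace ℝ E]
    (g : E → E → E → ℝ) (s : Set E) : Prop :=
  ∀ x ∈ s, ∀ u, (∀ v, g x u v = 0) → u = 0

/-- `Γ` is the Levi-Civita connection of `g` on `s`: torsion free (symmetric
Christoffel symbols) and compatible with the metric. -/
def IsLC {E : Type*} [NormedAddCommGroup E] [NormedSpace ℝ E]
    (g : E → E → E → ℝ) (Γ : E → E → E → E) (s : Set E) : Prop :=
  (∀ x ∈ s, ∀ u v, Γ x u v = Γ x v u) ∧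
  (∀ x ∈ s, ∀ u v w, fderiv ℝ (fun y => g y v w) x u
      = g x (Γ x u v) w + g x v (Γ x u w))

/-- Covariant Hessian `DDf` of a function (evaluated on constant directions,
which suffices since the Hessian is tensorial). -/
def hessT {E : Type*} [NormedAddCommGroup E] [NormedSpace ℝ E]
    (Γ : E → E → E → E) (f : E → ℝ) (x u v : E) : ℝ :=
  fderiv ℝ (fun y => fderiv ℝ f y v) x u - fderiv ℝ f x (Γ x u v)

/-- Covariant derivative `DT` of a 2-tensor field `T`. -/
def covTen {E : Type*} [NormedAddCommGroup E] [NormedSpace ℝ E]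
    (Γ : E → E → E → E) (T : E → E → E → ℝ) (x u v w : E) : ℝ :=
  fderiv ℝ (fun y => T y v w) x u - T x (Γ x u v) w - T x v (Γ x u w)

/-- The Obata equation (*) on `s`:
`DDDα(X,Y,Z) + 2(Dα⊗g)(X,Y,Z) + (Dα⊗g)(Y,X,Z) + (Dα⊗g)(Z,X,Y) = 0`. -/
def ObataEq {E : Type*} [NormedAddCommGroup E] [NormedSpace ℝ E]
    (g : E → E → E → ℝ) (Γ : E → E → E → E) (α : E → ℝ) (s : Set E) : Prop :=
  ∀ x ∈ s, ∀ u v w : E,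
    covTen Γ (hessT Γ α) x u v w
      + 2 * (fderiv ℝ α x u * g x v w)
      + fderiv ℝ α x v * g x u w + fderiv ℝ α x w * g x u v = 0

/-- The cone metric `ĝ = dr² + r² g` on the cone `M̂ = ℝ₊* × M`
(points `p = (r, m)`, tangent vectors `u = (a, X)` with `a` the `∂_r`-component). -/
def coneMetric {E : Type*} [NormedAddCommGroup E] [NormedSpace ℝ E]
    (g : E → E → E → ℝ) : (ℝ × E) → (ℝ × E) → (ℝ × E) → ℝ :=
  fun p u v => u.1 * v.1 + p.1 ^ 2 * g p.2 u.2 v.2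

/-- The cone `M̂ = ℝ₊* × M` inside the chart `ℝ × M`. -/
def coneSet (E : Type*) : Set (ℝ × E) := {p : ℝ × E | 0 < p.1}

/-- Master derivative computation on the chart `ℝ × (ℝ × F)`. -/
lemma master_fderiv {F : Type*} [NormedAddCommGroup F] [NormedSpace ℝ F]
    (φ₁ φ₂ : F → ℝ) (L₁ L₂ : F →L[ℝ] ℝ) (p : ℝ × (ℝ × F))
    (h₁ : HasFDerivAt φ₁ L₁ p.2.2) (h₂ : HasFDerivAt φ₂ L₂ p.2.2)
    (c₀ c₁ A B C D : ℝ) (u : ℝ × (ℝ × F)) :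
    fderiv ℝ (fun y : ℝ × (ℝ × F) => c₀ + c₁ * (y.1*y.1)
       + Real.exp (2*y.2.1) * ((A + B*y.1)*(C + D*y.1))
       + (y.1*y.1) * Real.exp (2*y.2.1) * φ₁ y.2.2 + (y.1*y.1) * φ₂ y.2.2) p u
    = c₁ * (2*p.1*u.1)
      + Real.exp (2*p.2.1) * ((2*u.2.1) * ((A + B*p.1)*(C + D*p.1))
          + (u.1*B*(C+D*p.1) + (A+B*p.1)*(u.1*D)))
      + (2*p.1*u.1 + (p.1*p.1) * (2*u.2.1)) * Real.exp (2*p.2.1) * φ₁ p.2.2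
      + (p.1*p.1) * Real.exp (2*p.2.1) * L₁ u.2.2
      + 2*p.1*u.1 * φ₂ p.2.2 + (p.1*p.1) * L₂ u.2.2 := by
  have hr : HasFDerivAt (fun y : ℝ × (ℝ × F) => y.1)
      (ContinuousLinearMap.fst ℝ ℝ (ℝ × F)) p := hasFDerivAt_fst
  have hs : HasFDerivAt (fun y : ℝ × (ℝ × F) => y.2.1)
      ((ContinuousLinearMap.fst ℝ ℝ F).comp (ContinuousLinearMap.snd ℝ ℝ (ℝ × F))) p :=
    hasFDerivAt_fst.comp p hasFDerivAt_snd
  have hn : HasFDerivAt (fun y : ℝ × (ℝ × F) => y.2.2)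
      ((ContinuousLinearMap.snd ℝ ℝ F).comp (ContinuousLinearMap.snd ℝ ℝ (ℝ × F))) p :=
    hasFDerivAt_snd.comp p hasFDerivAt_snd
  have hE : HasFDerivAt (fun y : ℝ × (ℝ × F) => Real.exp (2*y.2.1)) _ p :=
    (hs.const_mul (2:ℝ)).exp
  have hr2 : HasFDerivAt (fun y : ℝ × (ℝ × F) => y.1*y.1) _ p := hr.mul hr
  have hP1 : HasFDerivAt (fun y : ℝ × (ℝ × F) => φ₁ y.2.2) _ p := h₁.comp p hn
  have hP2 : HasFDerivAt (fun y : ℝ × (ℝ × F) => φ₂ y.2.2) _ p := h₂.comp p hn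
  have hQ : HasFDerivAt (fun y : ℝ × (ℝ × F) => (A + B*y.1)*(C + D*y.1)) _ p :=
    (((hr.const_mul B).const_add A).mul ((hr.const_mul D).const_add C))
  have hbig : HasFDerivAt (fun y : ℝ × (ℝ × F) => c₀ + c₁ * (y.1*y.1)
       + Real.exp (2*y.2.1) * ((A + B*y.1)*(C + D*y.1))
       + (y.1*y.1) * Real.exp (2*y.2.1) * φ₁ y.2.2 + (y.1*y.1) * φ₂ y.2.2) _ p :=
    ((((hr2.const_mul c₁).const_add c₀).add (hE.mul hQ)).add
      ((hr2.mul hE).mul hP1)).add (hr2.mul hP2)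
  rw [hbig.fderiv]
  simp only [ContinuousLinearMap.add_apply, ContinuousLinearMap.smul_apply,
    ContinuousLinearMap.coe_smul', Pi.smul_apply, ContinuousLinearMap.coe_comp',
    Function.comp_apply, ContinuousLinearMap.coe_fst', ContinuousLinearMap.coe_snd',
    smul_eq_mul, ContinuousLinearMap.smulRight_apply, ContinuousLinearMap.one_apply, Pi.mul_apply]
  ring

/-- if `(N,h)` carries a parallel symmetric 2-tensor `S` with `S̃² = 0`,
then `g = -ds² + e^{2s}(h - S) + S` on `M = ℝ × N` is nondegenerate, and the cone over
`(M,g)` admits a nontrivial parallel symmetric 2-tensor `T` with `T̃² = 0` and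
associated Obata function `α(s,n) = e^{2s}`. -/
theorem nilpotent_case_construction
    {F : Type*} [NormedAddCommGroup F] [NormedSpace ℝ F]
    (h : F → F → F → ℝ) (hh : IsMetric h) (hhnd : Nondeg h Set.univ)
    (ΓN : F → F → F → F) (hΓN : IsLC h ΓN Set.univ)
    (S : F → F → F → ℝ)
    (hSsym : ∀ n u v, S n u v = S n v u)
    (hSpar : ∀ n u v w : F, covTen ΓN S n u v w = 0)
    (Send : F → F → F)
    (hSend : ∀ n u v, S n u v = h n u (Send n v))
    (hS2 : ∀ n u, Send n (Send n u) = 0)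
    (gM : (ℝ × F) → (ℝ × F) → (ℝ × F) → ℝ)
    (hgM : ∀ (x : ℝ × F) (u v : ℝ × F),
        gM x u v = -(u.1 * v.1) + Real.exp (2 * x.1) * (h x.2 u.2 v.2 - S x.2 u.2 v.2)
          + S x.2 u.2 v.2) :
    Nondeg gM Set.univ ∧
    (∀ Γc : (ℝ × (ℝ × F)) → (ℝ × (ℝ × F)) → (ℝ × (ℝ × F)) → (ℝ × (ℝ × F)),
      IsLC (coneMetric gM) Γc (coneSet (ℝ × F)) →
      ∃ (T : (ℝ × (ℝ × F)) → (ℝ × (ℝ × F)) → (ℝ × (ℝ × F)) → ℝ)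
        (Tend : (ℝ × (ℝ × F)) → (ℝ × (ℝ × F)) → (ℝ × (ℝ × F))),
        (∀ p u v, T p u v = coneMetric gM p u (Tend p v)) ∧
        (∀ p u v, T p u v = T p v u) ∧
        (∃ p : ℝ × (ℝ × F), 0 < p.1 ∧ ∃ u v, T p u v ≠ 0) ∧
        (∀ p : ℝ × (ℝ × F), 0 < p.1 → ∀ u v w, covTen Γc T p u v w = 0) ∧
        (∀ p : ℝ × (ℝ × F), 0 < p.1 → ∀ u, Tend p (Tend p u) = 0) ∧
        (∀ p : ℝ × (ℝ × F), 0 < p.1 →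
          T p ((1 : ℝ), (0 : ℝ × F)) ((1 : ℝ), (0 : ℝ × F)) = Real.exp (2 * p.2.1))) := by
  -- basic pointwise linear algebra
  have hsym : ∀ n u v, h n u v = h n v u := fun n => (hh n).2.2
  have hz2 : ∀ n a, h n a 0 = 0 := fun n a => ((hh n).1 a).map_zero
  have hz1 : ∀ n b, h n 0 b = 0 := fun n b => ((hh n).2.1 b).map_zero
  have Sz1 : ∀ n b, S n 0 b = 0 := by
    intro n b; rw [hSend]; exact hz1 n _
  have Sz2 : ∀ n a, S n a 0 = 0 := by
    intro n a; rw [hSsym]; exact Sz1 n a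
  have hSend1 : ∀ n a b, S n a b = h n (Send n a) b := by
    intro n a b; rw [hSsym n a b, hSend n b a, hsym]
  have SS0 : ∀ n a b, S n a (Send n b) = 0 := by
    intro n a b; rw [hSend n a (Send n b), hS2 n b]; exact hz2 n a
  have SS1 : ∀ n a b, S n (Send n a) b = 0 := by
    intro n a b; rw [hSsym]; exact SS0 n b a
  have Sadd2 : ∀ n a b c, S n a (b + c) = S n a b + S n a c := by
    intro n a b c
    rw [hSsym n a (b+c), hSend n (b+c) a, ((hh n).2.1 (Send n a)).map_add,
      ← hSend n b a, ← hSend n c a, hSsym n b a, hSsym n c a]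
  have gMsymm : ∀ (m : ℝ × F) α β, gM m α β = gM m β α := by
    intro m α β; rw [hgM, hgM, hsym m.2 α.2 β.2, hSsym m.2 α.2 β.2]; ring
  have gMadd2 : ∀ (m : ℝ × F) α β γ, gM m α (β + γ) = gM m α β + gM m α γ := by
    intro m α β γ
    rw [hgM, hgM, hgM, Prod.fst_add, Prod.snd_add, ((hh m.2).1 α.2).map_add,
      Sadd2 m.2 α.2 β.2 γ.2]
    ring
  have Gsymm : ∀ (q α β : ℝ × (ℝ × F)),
      coneMetric gM q α β = coneMetric gM q β α := by
    intro q α β; simp only [coneMetric]; rw [gMsymm]; ring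
  have Gadd2 : ∀ (q α β γ : ℝ × (ℝ × F)),
      coneMetric gM q α (β + γ) = coneMetric gM q α β + coneMetric gM q α γ := by
    intro q α β γ; simp only [coneMetric]; rw [Prod.fst_add, Prod.snd_add, gMadd2]; ring
  constructor
  · -- Nondegeneracy of gM
    intro x _ u hu
    have hEne : Real.exp (2*x.1) ≠ 0 := ne_of_gt (Real.exp_pos _)
    have hu1 : u.1 = 0 := by
      have h1 := hu ((1:ℝ),(0:F))
      rw [hgM] at h1
      dsimp only at h1
      rw [hz2, Sz2] at h1
      linarith
    have key : ∀ y : F, Real.exp (2*x.1) * h x.2 u.2 y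
        - (Real.exp (2*x.1) - 1) * S x.2 u.2 y = 0 := by
      intro y
      have h2 := hu ((0:ℝ), y)
      rw [hgM] at h2
      dsimp only at h2
      linear_combination h2
    have hSu : ∀ y : F, S x.2 u.2 y = 0 := by
      have hz : ∀ y : F, h x.2 (Real.exp (2*x.1) • u.2
          - (Real.exp (2*x.1) - 1) • Send x.2 u.2) y = 0 := by
        intro y
        have e1 : ∀ α : F, h x.2 α y = (IsLinearMap.mk' _ ((hh x.2).2.1 y)) α :=
          fun α => rfl
        rw [e1, map_sub, map_smul, map_smul]
        simp only [smul_eq_mul]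
        rw [← e1, ← e1, ← hSend1]
        linear_combination key y
      have hz0 := hhnd x.2 (Set.mem_univ _) _ hz
      intro y
      have expand2 : S x.2 (Real.exp (2*x.1) • u.2
          - (Real.exp (2*x.1) - 1) • Send x.2 u.2) y
          = Real.exp (2*x.1) * S x.2 u.2 y := by
        rw [hSend x.2 _ y]
        have e2 : ∀ α : F, h x.2 α (Send x.2 y) =
            (IsLinearMap.mk' _ ((hh x.2).2.1 (Send x.2 y))) α := fun α => rfl
        rw [e2, map_sub, map_smul, map_smul]
        simp only [smul_eq_mul]
        rw [← e2, ← e2, ← hSend, ← hSend, SS1]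
        ring
      rw [hz0, Sz1] at expand2
      exact ((mul_eq_zero.mp expand2.symm).resolve_left hEne)
    refine Prod.ext hu1 ?_
    apply hhnd x.2 (Set.mem_univ _)
    intro y
    have k := key y
    rw [hSu y] at k
    have : Real.exp (2*x.1) * h x.2 u.2 y = 0 := by linarith
    exact (mul_eq_zero.mp this).resolve_left hEne
  · -- the cone part
    intro Γc hΓc
    -- Koszul formula
    have kos : ∀ q : ℝ × (ℝ × F), 0 < q.1 → ∀ a b c : ℝ × (ℝ × F),
        2 * coneMetric gM q (Γc q a b) c
          = fderiv ℝ (fun y => coneMetric gM y b c) q a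
            + fderiv ℝ (fun y => coneMetric gM y a c) q b
            - fderiv ℝ (fun y => coneMetric gM y a b) q c := by
      intro q hq a b c
      have c1 := hΓc.2 q hq a b c
      have c2 := hΓc.2 q hq b a c
      have c3 := hΓc.2 q hq c a b
      have s1 : Γc q b a = Γc q a b := hΓc.1 q hq b a
      have s2 : Γc q c a = Γc q a c := hΓc.1 q hq c a
      have s3 : Γc q c b = Γc q b c := hΓc.1 q hq c b
      rw [s1] at c2
      rw [s2, s3] at c3
      rw [c1, c2, c3, Gsymm q b (Γc q a c)]
      ring
    -- forced differentiability of the fiber part of the metric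
    have diffG : ∀ q : ℝ × (ℝ × F), 0 < q.1 → ∀ ρ τ : F,
        DifferentiableAt ℝ (fun y : ℝ × (ℝ × F) =>
          (y.1*y.1) * (Real.exp (2*y.2.1) * (h y.2.2 ρ τ - S y.2.2 ρ τ)
            + S y.2.2 ρ τ)) q := by
      intro q hq ρ τ
      by_contra hnd
      have hker : ∀ Z : ℝ × (ℝ × F),
          2 * coneMetric gM q (Γc q ((1:ℝ),((0:ℝ),(0:F))) ((0:ℝ),((1:ℝ),ρ))) Z
            = fderiv ℝ (fun y => coneMetric gM y ((0:ℝ),((1:ℝ),ρ)) Z) q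
                ((1:ℝ),((0:ℝ),(0:F))) := by
        intro Z
        have hk := kos q hq ((1:ℝ),((0:ℝ),(0:F))) ((0:ℝ),((1:ℝ),ρ)) Z
        have e2 : (fun y : ℝ × (ℝ × F) =>
            coneMetric gM y ((1:ℝ),((0:ℝ),(0:F))) Z) = (fun _ => Z.1) := by
          funext y; simp only [coneMetric]; rw [hgM]
          dsimp only
          rw [hz1, Sz1]; ring
        have e3 : (fun y : ℝ × (ℝ × F) =>
            coneMetric gM y ((1:ℝ),((0:ℝ),(0:F))) ((0:ℝ),((1:ℝ),ρ))) = (fun _ => (0:ℝ)) := by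
          funext y; simp only [coneMetric]; rw [hgM]
          dsimp only
          rw [hz1, Sz1]; ring
        rw [e2, e3, (hasFDerivAt_const Z.1 q).fderiv, (hasFDerivAt_const (0:ℝ) q).fderiv] at hk
        simp only [ContinuousLinearMap.zero_apply] at hk
        linarith
      have hWW : ((0:ℝ),((1:ℝ),τ)) + ((0:ℝ),((-1:ℝ),(0:F))) = (((0:ℝ),((0:ℝ),τ)) : ℝ × (ℝ × F)) := by
        simp [Prod.ext_iff]
      have main : fderiv ℝ (fun y => coneMetric gM y ((0:ℝ),((1:ℝ),ρ)) (((0:ℝ),((0:ℝ),τ)) : ℝ × (ℝ × F))) q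
            ((1:ℝ),((0:ℝ),(0:F)))
          = fderiv ℝ (fun y => coneMetric gM y ((0:ℝ),((1:ℝ),ρ)) ((0:ℝ),((1:ℝ),τ))) q
              ((1:ℝ),((0:ℝ),(0:F)))
            + fderiv ℝ (fun y => coneMetric gM y ((0:ℝ),((1:ℝ),ρ)) ((0:ℝ),((-1:ℝ),(0:F)))) q
              ((1:ℝ),((0:ℝ),(0:F))) := by
        have h1 := hker ((0:ℝ),((1:ℝ),τ))
        have h2 := hker ((0:ℝ),((-1:ℝ),(0:F)))
        have h3 := hker (((0:ℝ),((1:ℝ),τ)) + ((0:ℝ),((-1:ℝ),(0:F))))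
        rw [hWW] at h3
        have hA := Gadd2 q (Γc q ((1:ℝ),((0:ℝ),(0:F))) ((0:ℝ),((1:ℝ),ρ)))
          ((0:ℝ),((1:ℝ),τ)) ((0:ℝ),((-1:ℝ),(0:F)))
        rw [hWW] at hA
        linarith
      have eW : (fun y : ℝ × (ℝ × F) => coneMetric gM y ((0:ℝ),((1:ℝ),ρ)) ((0:ℝ),((1:ℝ),τ)))
          = (fun y : ℝ × (ℝ × F) => ((y.1*y.1) * (Real.exp (2*y.2.1) * (h y.2.2 ρ τ - S y.2.2 ρ τ)
            + S y.2.2 ρ τ)) - y.1*y.1) := by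
        funext y; simp only [coneMetric]; rw [hgM]; dsimp only; ring
      have eW' : (fun y : ℝ × (ℝ × F) => coneMetric gM y ((0:ℝ),((1:ℝ),ρ)) ((0:ℝ),((-1:ℝ),(0:F))))
          = (fun y : ℝ × (ℝ × F) => y.1*y.1) := by
        funext y; simp only [coneMetric]; rw [hgM]; dsimp only
        rw [hz2, Sz2]; ring
      have eWW : (fun y : ℝ × (ℝ × F) => coneMetric gM y ((0:ℝ),((1:ℝ),ρ)) (((0:ℝ),((0:ℝ),τ)) : ℝ × (ℝ × F)))
          = (fun y : ℝ × (ℝ × F) => (y.1*y.1) * (Real.exp (2*y.2.1) * (h y.2.2 ρ τ - S y.2.2 ρ τ)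
            + S y.2.2 ρ τ)) := by
        funext y; simp only [coneMetric]; rw [hgM]; dsimp only; ring
      have hd2 : DifferentiableAt ℝ (fun y : ℝ × (ℝ × F) => y.1*y.1) q :=
        differentiableAt_fst.mul differentiableAt_fst
      have hnot2 : ¬ DifferentiableAt ℝ
          (fun y : ℝ × (ℝ × F) => ((y.1*y.1) * (Real.exp (2*y.2.1) * (h y.2.2 ρ τ - S y.2.2 ρ τ)
            + S y.2.2 ρ τ)) - y.1*y.1) q := by
        intro hdd
        apply hnd
        have : (fun y : ℝ × (ℝ × F) => (y.1*y.1) * (Real.exp (2*y.2.1) * (h y.2.2 ρ τ - S y.2.2 ρ τ)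
            + S y.2.2 ρ τ)) = (fun y : ℝ × (ℝ × F) => (((y.1*y.1) * (Real.exp (2*y.2.1) * (h y.2.2 ρ τ - S y.2.2 ρ τ)
            + S y.2.2 ρ τ)) - y.1*y.1) + y.1*y.1) := by
          funext y; ring
        rw [this]
        exact hdd.add hd2
      have hfq : HasFDerivAt (fun y : ℝ × (ℝ × F) => y.1)
          (ContinuousLinearMap.fst ℝ ℝ (ℝ × F)) q := hasFDerivAt_fst
      have v2 : fderiv ℝ (fun y : ℝ × (ℝ × F) => y.1*y.1) q ((1:ℝ),((0:ℝ),(0:F))) = 2*q.1 := by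
        rw [HasFDerivAt.fderiv (f := fun y : ℝ × (ℝ × F) => y.1*y.1) (hfq.mul hfq)]
        simp only [ContinuousLinearMap.add_apply, ContinuousLinearMap.smul_apply,
          ContinuousLinearMap.coe_fst', smul_eq_mul]
        ring
      rw [eW, eW', eWW, fderiv_zero_of_not_differentiableAt hnd,
        fderiv_zero_of_not_differentiableAt hnot2, v2] at main
      simp only [ContinuousLinearMap.zero_apply] at main
      linarith
    -- differentiability of the slices of h and S
    have diffh : ∀ (m : F) (ρ τ : F), DifferentiableAt ℝ (fun n => h n ρ τ) m := by
      intro m ρ τ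
      have hι : DifferentiableAt ℝ (fun n : F => (((1:ℝ),((0:ℝ),n)) : ℝ × (ℝ × F))) m :=
        (differentiableAt_const (1:ℝ)).prodMk
          ((differentiableAt_const (0:ℝ)).prodMk differentiableAt_id)
      have H := (diffG (((1:ℝ),((0:ℝ),m)) : ℝ × (ℝ × F)) one_pos ρ τ).comp m hι
      have e : (fun nn : F => h nn ρ τ)
          = (fun y : ℝ × (ℝ × F) => (y.1*y.1) * (Real.exp (2*y.2.1) * (h y.2.2 ρ τ - S y.2.2 ρ τ)
            + S y.2.2 ρ τ)) ∘ (fun n : F => (((1:ℝ),((0:ℝ),n)) : ℝ × (ℝ × F))) := by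
        funext nn
        show h nn ρ τ = (1*1) * (Real.exp (2*0) * (h nn ρ τ - S nn ρ τ) + S nn ρ τ)
        rw [show (2:ℝ)*0 = 0 by ring, Real.exp_zero]
        ring
      rw [e]
      exact H
    have diffS : ∀ (m : F) (ρ τ : F), DifferentiableAt ℝ (fun n => S n ρ τ) m := by
      intro m ρ τ
      have hι : DifferentiableAt ℝ (fun n : F => (((1:ℝ),((1:ℝ),n)) : ℝ × (ℝ × F))) m :=
        (differentiableAt_const (1:ℝ)).prodMk
          ((differentiableAt_const (1:ℝ)).prodMk differentiableAt_id)
      have H := (diffG (((1:ℝ),((1:ℝ),m)) : ℝ × (ℝ × F)) one_pos ρ τ).comp m hι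
      have hlt : (1:ℝ) < Real.exp 2 := by
        calc (1:ℝ) = Real.exp 0 := (Real.exp_zero).symm
        _ < Real.exp 2 := Real.exp_lt_exp.mpr (by norm_num)
      have hne : Real.exp 2 - 1 ≠ 0 := by linarith
      have e : (fun nn : F => S nn ρ τ)
          = (fun nn : F => (Real.exp 2 - 1)⁻¹ * (Real.exp 2 * h nn ρ τ
              - ((fun y : ℝ × (ℝ × F) => (y.1*y.1) * (Real.exp (2*y.2.1) * (h y.2.2 ρ τ - S y.2.2 ρ τ)
                + S y.2.2 ρ τ)) ∘ (fun n : F => (((1:ℝ),((1:ℝ),n)) : ℝ × (ℝ × F)))) nn)) := by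
        funext nn
        show S nn ρ τ = (Real.exp 2 - 1)⁻¹ * (Real.exp 2 * h nn ρ τ
          - (1*1) * (Real.exp (2*1) * (h nn ρ τ - S nn ρ τ) + S nn ρ τ))
        rw [show (2:ℝ)*1 = 2 by ring]
        field_simp
        ring
      rw [e]
      exact (((differentiableAt_const (Real.exp 2)).mul (diffh m ρ τ)).sub H).const_mul _
    -- pinned values of the slice derivatives
    have fdh : ∀ (m ρ τ ξ : F), fderiv ℝ (fun n => h n ρ τ) m ξ
        = h m (ΓN m ξ ρ) τ + h m ρ (ΓN m ξ τ) := fun m ρ τ ξ =>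
      hΓN.2 m (Set.mem_univ m) ξ ρ τ
    have fdS : ∀ (m ρ τ ξ : F), fderiv ℝ (fun n => S n ρ τ) m ξ
        = S m (ΓN m ξ ρ) τ + S m ρ (ΓN m ξ τ) := by
      intro m ρ τ ξ
      have := hSpar m ξ ρ τ
      simp only [covTen] at this
      linarith
    -- the general derivative of the cone metric coefficients
    have Dval : ∀ (q V Z dir : ℝ × (ℝ × F)),
        fderiv ℝ (fun y => coneMetric gM y V Z) q dir
        = -(V.2.1*Z.2.1)*(2*q.1*dir.1)
          + (2*q.1*dir.1 + q.1*q.1*(2*dir.2.1)) * Real.exp (2*q.2.1)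
              * (h q.2.2 V.2.2 Z.2.2 - S q.2.2 V.2.2 Z.2.2)
          + q.1*q.1 * Real.exp (2*q.2.1)
              * (h q.2.2 (ΓN q.2.2 dir.2.2 V.2.2) Z.2.2 + h q.2.2 V.2.2 (ΓN q.2.2 dir.2.2 Z.2.2)
                 - S q.2.2 (ΓN q.2.2 dir.2.2 V.2.2) Z.2.2 - S q.2.2 V.2.2 (ΓN q.2.2 dir.2.2 Z.2.2))
          + 2*q.1*dir.1 * S q.2.2 V.2.2 Z.2.2
          + q.1*q.1 * (S q.2.2 (ΓN q.2.2 dir.2.2 V.2.2) Z.2.2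
              + S q.2.2 V.2.2 (ΓN q.2.2 dir.2.2 Z.2.2)) := by
      intro q V Z dir
      have e : (fun y => coneMetric gM y V Z)
          = (fun y : ℝ × (ℝ × F) => (V.1*Z.1) + (-(V.2.1*Z.2.1)) * (y.1*y.1)
              + Real.exp (2*y.2.1) * ((0 + 0*y.1)*(0 + 0*y.1))
              + (y.1*y.1) * Real.exp (2*y.2.1) * (h y.2.2 V.2.2 Z.2.2 - S y.2.2 V.2.2 Z.2.2)
              + (y.1*y.1) * (S y.2.2 V.2.2 Z.2.2)) := by
        funext y; simp only [coneMetric]; rw [hgM]; ring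
      rw [e, master_fderiv (fun n => h n V.2.2 Z.2.2 - S n V.2.2 Z.2.2) (fun n => S n V.2.2 Z.2.2)
        (fderiv ℝ (fun n => h n V.2.2 Z.2.2) q.2.2 - fderiv ℝ (fun n => S n V.2.2 Z.2.2) q.2.2)
        (fderiv ℝ (fun n => S n V.2.2 Z.2.2) q.2.2) q
        (((diffh q.2.2 V.2.2 Z.2.2).hasFDerivAt).sub ((diffS q.2.2 V.2.2 Z.2.2).hasFDerivAt))
        ((diffS q.2.2 V.2.2 Z.2.2).hasFDerivAt)
        (V.1*Z.1) (-(V.2.1*Z.2.1)) 0 0 0 0 dir]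
      simp only [ContinuousLinearMap.sub_apply]
      rw [fdh q.2.2 V.2.2 Z.2.2 dir.2.2, fdS q.2.2 V.2.2 Z.2.2 dir.2.2]
      ring
    -- the parallel tensor on the cone
    set Tfun : (ℝ × (ℝ × F)) → (ℝ × (ℝ × F)) → (ℝ × (ℝ × F)) → ℝ :=
      fun p v w => Real.exp (2*p.2.1) * ((v.1 + p.1*v.2.1)*(w.1 + p.1*w.2.1)
        + (p.1*p.1) * S p.2.2 v.2.2 w.2.2) with hTfun
    set Tendfun : (ℝ × (ℝ × F)) → (ℝ × (ℝ × F)) → (ℝ × (ℝ × F)) :=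
      fun p w => (Real.exp (2*p.2.1) * (w.1 + p.1*w.2.1),
        (-(Real.exp (2*p.2.1) / p.1) * (w.1 + p.1*w.2.1), Send p.2.2 w.2.2)) with hTendfun
    have hrep : ∀ (q a b : ℝ × (ℝ × F)), Tfun q a b = coneMetric gM q a (Tendfun q b) := by
      intro q a b
      simp only [hTfun, hTendfun, coneMetric]
      rw [hgM]
      dsimp only
      rw [← hSend q.2.2 a.2.2 b.2.2, SS0 q.2.2 a.2.2 b.2.2]
      rcases eq_or_ne q.1 0 with h0 | h0
      · rw [h0]; ring
      · field_simp
        ring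
    have hTsym : ∀ (q a b : ℝ × (ℝ × F)), Tfun q a b = Tfun q b a := by
      intro q a b; simp only [hTfun]; rw [hSsym q.2.2 a.2.2 b.2.2]; ring
    refine ⟨Tfun, Tendfun, hrep, hTsym, ?_, ?_, ?_, ?_⟩
    · -- nontriviality
      refine ⟨((1:ℝ),((0:ℝ),(0:F))), one_pos,
        ((1:ℝ),((0:ℝ),(0:F))), ((1:ℝ),((0:ℝ),(0:F))), ?_⟩
      simp only [hTfun]
      rw [Sz1, show (2:ℝ)*0 = 0 by ring, Real.exp_zero]
      norm_num
    · -- parallelism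
      intro p hp u v w
      have hr0 : p.1 ≠ 0 := ne_of_gt hp
      simp only [covTen]
      rw [hrep p (Γc p u v) w, hTsym p v (Γc p u w), hrep p (Γc p u w) v]
      have k1 := kos p hp u v (Tendfun p w)
      have k2 := kos p hp u w (Tendfun p v)
      rw [Dval p v (Tendfun p w) u, Dval p u (Tendfun p w) v,
        Dval p u v (Tendfun p w)] at k1
      rw [Dval p w (Tendfun p v) u, Dval p u (Tendfun p v) w,
        Dval p u w (Tendfun p v)] at k2
      have cw1 : (Tendfun p w).1 = Real.exp (2*p.2.1) * (w.1 + p.1*w.2.1) := by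
        simp only [hTendfun]
      have cw2 : (Tendfun p w).2.1 = -(Real.exp (2*p.2.1) / p.1) * (w.1 + p.1*w.2.1) := by
        simp only [hTendfun]
      have cw3 : (Tendfun p w).2.2 = Send p.2.2 w.2.2 := by
        simp only [hTendfun]
      have cv1 : (Tendfun p v).1 = Real.exp (2*p.2.1) * (v.1 + p.1*v.2.1) := by
        simp only [hTendfun]
      have cv2 : (Tendfun p v).2.1 = -(Real.exp (2*p.2.1) / p.1) * (v.1 + p.1*v.2.1) := by
        simp only [hTendfun]
      have cv3 : (Tendfun p v).2.2 = Send p.2.2 v.2.2 := by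
        simp only [hTendfun]
      rw [cw1, cw2, cw3] at k1
      rw [cv1, cv2, cv3] at k2
      have Θval : fderiv ℝ (fun y => Tfun y v w) p u
          = Real.exp (2*p.2.1) * ((2*u.2.1) * ((v.1 + v.2.1*p.1)*(w.1 + w.2.1*p.1))
              + (u.1*v.2.1*(w.1+w.2.1*p.1) + (v.1+v.2.1*p.1)*(u.1*w.2.1)))
            + (2*p.1*u.1 + (p.1*p.1)*(2*u.2.1)) * Real.exp (2*p.2.1) * S p.2.2 v.2.2 w.2.2
            + (p.1*p.1) * Real.exp (2*p.2.1) * (S p.2.2 (ΓN p.2.2 u.2.2 v.2.2) w.2.2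
                + S p.2.2 v.2.2 (ΓN p.2.2 u.2.2 w.2.2)) := by
        have e : (fun y => Tfun y v w) = (fun y : ℝ × (ℝ × F) => (0:ℝ) + (0:ℝ)*(y.1*y.1)
            + Real.exp (2*y.2.1) * ((v.1 + v.2.1*y.1)*(w.1 + w.2.1*y.1))
            + (y.1*y.1) * Real.exp (2*y.2.1) * (S y.2.2 v.2.2 w.2.2)
            + (y.1*y.1) * (fun _ : F => (0:ℝ)) y.2.2) := by
          funext y
          show Tfun y v w = (0:ℝ) + (0:ℝ)*(y.1*y.1)
            + Real.exp (2*y.2.1) * ((v.1 + v.2.1*y.1)*(w.1 + w.2.1*y.1))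
            + (y.1*y.1) * Real.exp (2*y.2.1) * (S y.2.2 v.2.2 w.2.2)
            + (y.1*y.1) * (0:ℝ)
          simp only [hTfun]
          ring
        rw [e, master_fderiv (fun n => S n v.2.2 w.2.2) (fun _ : F => (0:ℝ))
          (fderiv ℝ (fun n => S n v.2.2 w.2.2) p.2.2) 0 p
          (diffS p.2.2 v.2.2 w.2.2).hasFDerivAt (hasFDerivAt_const (0:ℝ) p.2.2)
          0 0 v.1 v.2.1 w.1 w.2.1 u]
        rw [fdS p.2.2 v.2.2 w.2.2 u.2.2]
        simp only [ContinuousLinearMap.zero_apply]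
        ring
      rw [Θval]
      simp only [← hSend, SS0] at k1 k2
      have γ1 : ΓN p.2.2 (Send p.2.2 w.2.2) u.2.2 = ΓN p.2.2 u.2.2 (Send p.2.2 w.2.2) :=
        hΓN.1 p.2.2 (Set.mem_univ _) _ _
      have γ2 : ΓN p.2.2 (Send p.2.2 w.2.2) v.2.2 = ΓN p.2.2 v.2.2 (Send p.2.2 w.2.2) :=
        hΓN.1 p.2.2 (Set.mem_univ _) _ _
      have γ5 : ΓN p.2.2 v.2.2 u.2.2 = ΓN p.2.2 u.2.2 v.2.2 :=
        hΓN.1 p.2.2 (Set.mem_univ _) _ _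
      rw [γ1, γ2, γ5] at k1
      have γ3 : ΓN p.2.2 (Send p.2.2 v.2.2) u.2.2 = ΓN p.2.2 u.2.2 (Send p.2.2 v.2.2) :=
        hΓN.1 p.2.2 (Set.mem_univ _) _ _
      have γ4 : ΓN p.2.2 (Send p.2.2 v.2.2) w.2.2 = ΓN p.2.2 w.2.2 (Send p.2.2 v.2.2) :=
        hΓN.1 p.2.2 (Set.mem_univ _) _ _
      have γ6 : ΓN p.2.2 w.2.2 u.2.2 = ΓN p.2.2 u.2.2 w.2.2 :=
        hΓN.1 p.2.2 (Set.mem_univ _) _ _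
      rw [γ3, γ4, γ6] at k2
      have σ1 : h p.2.2 (ΓN p.2.2 u.2.2 (Send p.2.2 w.2.2)) v.2.2
          = h p.2.2 v.2.2 (ΓN p.2.2 u.2.2 (Send p.2.2 w.2.2)) := hsym _ _ _
      have σ2 : S p.2.2 (ΓN p.2.2 u.2.2 (Send p.2.2 w.2.2)) v.2.2
          = S p.2.2 v.2.2 (ΓN p.2.2 u.2.2 (Send p.2.2 w.2.2)) := hSsym _ _ _
      rw [σ1, σ2] at k1
      have σ3 : h p.2.2 (ΓN p.2.2 u.2.2 (Send p.2.2 v.2.2)) w.2.2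
          = h p.2.2 w.2.2 (ΓN p.2.2 u.2.2 (Send p.2.2 v.2.2)) := hsym _ _ _
      have σ4 : S p.2.2 (ΓN p.2.2 u.2.2 (Send p.2.2 v.2.2)) w.2.2
          = S p.2.2 w.2.2 (ΓN p.2.2 u.2.2 (Send p.2.2 v.2.2)) := hSsym _ _ _
      have σ5 : S p.2.2 (ΓN p.2.2 u.2.2 w.2.2) v.2.2
          = S p.2.2 v.2.2 (ΓN p.2.2 u.2.2 w.2.2) := hSsym _ _ _
      have σ6 : S p.2.2 w.2.2 v.2.2 = S p.2.2 v.2.2 w.2.2 := hSsym _ _ _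
      rw [σ3, σ4, σ5, σ6] at k2
      have g1 : coneMetric gM p (Γc p u v) (Tendfun p w)
          = 2 * coneMetric gM p (Γc p u v) (Tendfun p w) / 2 := by ring
      rw [g1, k1]
      have g2 : coneMetric gM p (Γc p u w) (Tendfun p v)
          = 2 * coneMetric gM p (Γc p u w) (Tendfun p v) / 2 := by ring
      rw [g2, k2]
      field_simp
      ring
    · -- nilpotency of Tend
      intro p hp u
      have hr0 : p.1 ≠ 0 := ne_of_gt hp
      simp only [hTendfun, Prod.ext_iff, Prod.fst_zero, Prod.snd_zero]
      refine ⟨?_, ?_, ?_⟩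
      · field_simp
        ring
      · field_simp
        ring
      · exact hS2 p.2.2 u.2.2
    · -- the Obata function
      intro p hp
      simp only [hTfun, Prod.fst_zero, Prod.snd_zero]
      rw [Sz1]
      ring
end
end

section
/- Let (N,h) be a pseudo-Riemannian manifold with a parallel symmetric 2-tensor S whose endomorphism satisfies S̃² = -Id (so h has split signature and even dimension). On M := ℝ × N define g = -ds² + h - sinh(2s)S. Then g is nondegenerate and the cone over (M,g) admits a nontrivial parallel symmetric 2-tensor T with T̃² = -Id. -/
noncomputable section

section Aux
variable {F : Type*} [NormedAddCommGroup F] [NormedSpace ℝ F]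

/-- Koszul formula, valid for any symmetric metric-like `g` with LC connection. -/
lemma crc_koszul {E : Type*} [NormedAddCommGroup E] [NormedSpace ℝ E]
    (g : E → E → E → ℝ) (gsym : ∀ p u v, g p u v = g p v u)
    (Γ : E → E → E → E) (s : Set E) (hΓ : IsLC g Γ s)
    (p : E) (hp : p ∈ s) (u v w : E) :
    2 * g p (Γ p u v) w =
      fderiv ℝ (fun y => g y v w) p u + fderiv ℝ (fun y => g y u w) p v
        - fderiv ℝ (fun y => g y u v) p w := by
  have h1 := hΓ.2 p hp u v w
  have h2 := hΓ.2 p hp v u w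
  have h3 := hΓ.2 p hp w u v
  rw [h1, h2, h3, hΓ.1 p hp v u, hΓ.1 p hp w u, hΓ.1 p hp w v,
    gsym p v (Γ p u w), gsym p u (Γ p v w)]
  ring

end Aux

section Aux2
variable {F : Type*} [NormedAddCommGroup F] [NormedSpace ℝ F]
variable (h : F → F → F → ℝ) (S : F → F → F → ℝ)
variable (gM : (ℝ × F) → (ℝ × F) → (ℝ × F) → ℝ)

/-- symmetry of the cone metric -/
lemma crc_gsym (hh : IsMetric h) (hSsym : ∀ n u v, S n u v = S n v u)
    (hgM : ∀ (x : ℝ × F) (u v : ℝ × F),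
        gM x u v = -(u.1 * v.1) + h x.2 u.2 v.2
          - Real.sinh (2 * x.1) * S x.2 u.2 v.2) :
    ∀ p u v, coneMetric gM p u v = coneMetric gM p v u := by
  intro p u v
  simp only [coneMetric, hgM]
  rw [(hh p.2.2).2.2 u.2.2 v.2.2, hSsym p.2.2 u.2.2 v.2.2]
  ring

lemma crc_Slin1 (hh : IsMetric h) (Send : F → F → F)
    (hSend : ∀ n u v, S n u v = h n u (Send n v)) (n : F) (v : F) :
    IsLinearMap ℝ (fun u => S n u v) := by
  have : (fun u => S n u v) = fun u => h n u (Send n v) := funext fun u => hSend n u v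
  rw [this]; exact (hh n).2.1 (Send n v)

/-- additivity of the cone metric in the third slot -/
lemma crc_gadd3 (hh : IsMetric h) (hSsym : ∀ n u v, S n u v = S n v u)
    (Send : F → F → F)
    (hSend : ∀ n u v, S n u v = h n u (Send n v))
    (hgM : ∀ (x : ℝ × F) (u v : ℝ × F),
        gM x u v = -(u.1 * v.1) + h x.2 u.2 v.2
          - Real.sinh (2 * x.1) * S x.2 u.2 v.2) :
    ∀ p u v w, coneMetric gM p u (v + w) = coneMetric gM p u v + coneMetric gM p u w := by
  intro p u v w
  simp only [coneMetric, hgM, Prod.fst_add, Prod.snd_add]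
  have hA : h p.2.2 u.2.2 (v.2.2 + w.2.2) = h p.2.2 u.2.2 v.2.2 + h p.2.2 u.2.2 w.2.2 :=
    ((hh p.2.2).1 u.2.2).map_add _ _
  have hS1 : ∀ a b, S p.2.2 u.2.2 (a + b) = S p.2.2 u.2.2 a + S p.2.2 u.2.2 b := by
    intro a b
    rw [hSsym p.2.2 u.2.2 (a+b), hSsym p.2.2 u.2.2 a, hSsym p.2.2 u.2.2 b]
    exact (crc_Slin1 h S hh Send hSend p.2.2 u.2.2).map_add a b
  rw [hA, hS1]; ring
end Aux2

section Aux3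
variable {F : Type*} [NormedAddCommGroup F] [NormedSpace ℝ F]
variable (h : F → F → F → ℝ) (S : F → F → F → ℝ)
variable (gM : (ℝ × F) → (ℝ × F) → (ℝ × F) → ℝ)

lemma crc_slice_diff (hh : IsMetric h) (hSsym : ∀ n u v, S n u v = S n v u)
    (Send : F → F → F)
    (hSend : ∀ n u v, S n u v = h n u (Send n v))
    (hgM : ∀ (x : ℝ × F) (u v : ℝ × F),
        gM x u v = -(u.1 * v.1) + h x.2 u.2 v.2
          - Real.sinh (2 * x.1) * S x.2 u.2 v.2)
    (Γc : (ℝ × (ℝ × F)) → (ℝ × (ℝ × F)) → (ℝ × (ℝ × F)) → (ℝ × (ℝ × F)))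
    (hΓc : IsLC (coneMetric gM) Γc (coneSet (ℝ × F)))
    (p : ℝ × (ℝ × F)) (hp : 0 < p.1) (V W : F) :
    DifferentiableAt ℝ
      (fun y : ℝ × (ℝ × F) => coneMetric gM y (0, (1, V)) (0, (0, W))) p := by
  classical
  set vh : ℝ × (ℝ × F) := (0, (1, V)) with hvh
  set wt : ℝ × (ℝ × F) := (0, (0, W)) with hwt
  set w0 : ℝ × (ℝ × F) := (0, (1, (0:F))) with hw0
  set wh : ℝ × (ℝ × F) := (0, (1, W)) with hwh
  set dr : ℝ × (ℝ × F) := (1, (0, (0:F))) with hdr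
  have gsym := crc_gsym h S gM hh hSsym hgM
  have gadd3 := crc_gadd3 h S gM hh hSsym Send hSend hgM
  have hZ2 : ∀ (n : F) (u : F), h n u 0 = 0 := fun n u => ((hh n).1 u).map_zero
  have hZ1 : ∀ (n : F) (u : F), h n 0 u = 0 := fun n u => ((hh n).2.1 u).map_zero
  have SZ1 : ∀ (n : F) (u : F), S n 0 u = 0 := fun n u =>
    (crc_Slin1 h S hh Send hSend n u).map_zero
  have SZ2 : ∀ (n : F) (u : F), S n u 0 = 0 := fun n u => by
    rw [hSsym]; exact SZ1 n u
  -- the three special slice computations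
  have f1 : (fun y : ℝ × (ℝ × F) => coneMetric gM y vh w0) = fun y => -(y.1*y.1) := by
    funext y
    simp only [coneMetric, hgM, hvh, hw0]
    rw [hZ2, SZ2]; ring
  have f2 : (fun y : ℝ × (ℝ × F) => coneMetric gM y vh wt)
      = fun y => (coneMetric gM y vh wh) + y.1*y.1 := by
    funext y
    simp only [coneMetric, hgM, hvh, hwt, hwh]; ring
  have f3 : ∀ x : ℝ × (ℝ × F), (fun y : ℝ × (ℝ × F) => coneMetric gM y dr x)
      = fun _ => x.1 := by
    intro x; funext y
    simp only [coneMetric, hgM, hdr]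
    rw [hZ1, SZ1]; ring
  by_contra hnd
  -- q is not differentiable either
  have hqnd : ¬ DifferentiableAt ℝ (fun y : ℝ × (ℝ × F) => coneMetric gM y vh wh) p := by
    intro hdq
    exact hnd (by
      rw [f2]
      exact hdq.add ((differentiable_fst.mul differentiable_fst).differentiableAt))
  have hfq : fderiv ℝ (fun y : ℝ × (ℝ × F) => coneMetric gM y vh wh) p = 0 :=
    fderiv_zero_of_not_differentiableAt hqnd
  have hfs : fderiv ℝ (fun y : ℝ × (ℝ × F) => coneMetric gM y vh wt) p = 0 :=
    fderiv_zero_of_not_differentiableAt hnd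
  have hfr : fderiv ℝ (fun y : ℝ × (ℝ × F) => coneMetric gM y vh w0) p dr = -(2*p.1) := by
    rw [f1]
    have H : HasFDerivAt (fun y : ℝ × (ℝ × F) => -(y.1*y.1))
        (-(p.1 • (ContinuousLinearMap.fst ℝ ℝ (ℝ × F))
            + p.1 • (ContinuousLinearMap.fst ℝ ℝ (ℝ × F)))) p :=
      (hasFDerivAt_fst.mul hasFDerivAt_fst).neg
    rw [H.fderiv]
    simp [hdr]
    ring
  have hft : ∀ x : ℝ × (ℝ × F), fderiv ℝ (fun y : ℝ × (ℝ × F) => coneMetric gM y dr x) p = 0 := by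
    intro x; rw [f3]; exact fderiv_const_apply x.1
  have hpc : p ∈ coneSet (ℝ × F) := hp
  -- step 1 : g p (Γ p dr wh) vh = 0
  have k1 := crc_koszul (coneMetric gM) gsym Γc _ hΓc p hpc dr wh vh
  have swap_q : (fun y : ℝ × (ℝ × F) => coneMetric gM y wh vh)
      = (fun y => coneMetric gM y vh wh) := funext fun y => gsym y wh vh
  rw [swap_q, hfq, hft vh, hft wh] at k1
  simp only [ContinuousLinearMap.zero_apply] at k1
  have B1 : coneMetric gM p (Γc p dr wh) vh = 0 := by linarith
  -- step 2 : A1 : g p (Γ p dr vh) wh = 0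
  have e_q := hΓc.2 p hpc dr vh wh
  rw [hfq] at e_q
  simp only [ContinuousLinearMap.zero_apply] at e_q
  have A1 : coneMetric gM p (Γc p dr vh) wh = 0 := by
    rw [gsym p vh (Γc p dr wh), B1] at e_q; linarith
  -- step 3 : g p (Γ p dr wt) vh = 0
  have k2 := crc_koszul (coneMetric gM) gsym Γc _ hΓc p hpc dr wt vh
  have swap_s : (fun y : ℝ × (ℝ × F) => coneMetric gM y wt vh)
      = (fun y => coneMetric gM y vh wt) := funext fun y => gsym y wt vh
  rw [swap_s, hfs, hft vh, hft wt] at k2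
  simp only [ContinuousLinearMap.zero_apply] at k2
  have B2 : coneMetric gM p (Γc p dr wt) vh = 0 := by linarith
  -- step 4 : A2 : g p (Γ p dr vh) wt = 0
  have e_s := hΓc.2 p hpc dr vh wt
  rw [hfs] at e_s
  simp only [ContinuousLinearMap.zero_apply] at e_s
  have A2 : coneMetric gM p (Γc p dr vh) wt = 0 := by
    rw [gsym p vh (Γc p dr wt), B2] at e_s; linarith
  -- step 5 : A3 : g p (Γ p dr vh) w0 = 0
  have hsum : wh = w0 + wt := by
    simp only [hwh, hw0, hwt, Prod.mk_add_mk]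
    norm_num
  have A3 : coneMetric gM p (Γc p dr vh) w0 = 0 := by
    have := gadd3 p (Γc p dr vh) w0 wt
    rw [← hsum, A1, A2] at this; linarith
  -- step 6 : g p (Γ p dr w0) vh = -p.1
  have k3 := crc_koszul (coneMetric gM) gsym Γc _ hΓc p hpc dr w0 vh
  have swap_r : (fun y : ℝ × (ℝ × F) => coneMetric gM y w0 vh)
      = (fun y => coneMetric gM y vh w0) := funext fun y => gsym y w0 vh
  rw [swap_r, hft vh, hft w0] at k3
  simp only [ContinuousLinearMap.zero_apply] at k3
  have B3 : coneMetric gM p (Γc p dr w0) vh = -p.1 := by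
    rw [hfr] at k3; linarith
  -- step 7: contradiction
  have e_r := hΓc.2 p hpc dr vh w0
  rw [hfr, A3, gsym p vh (Γc p dr w0), B3] at e_r
  have : p.1 = 0 := by linarith
  exact absurd this (ne_of_gt hp)

end Aux3

section Aux4
variable {F : Type*} [NormedAddCommGroup F] [NormedSpace ℝ F]
variable (h : F → F → F → ℝ) (S : F → F → F → ℝ)
variable (gM : (ℝ × F) → (ℝ × F) → (ℝ × F) → ℝ)

lemma crc_hS_diff (hh : IsMetric h) (hSsym : ∀ n u v, S n u v = S n v u)
    (Send : F → F → F)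
    (hSend : ∀ n u v, S n u v = h n u (Send n v))
    (hgM : ∀ (x : ℝ × F) (u v : ℝ × F),
        gM x u v = -(u.1 * v.1) + h x.2 u.2 v.2
          - Real.sinh (2 * x.1) * S x.2 u.2 v.2)
    (Γc : (ℝ × (ℝ × F)) → (ℝ × (ℝ × F)) → (ℝ × (ℝ × F)) → (ℝ × (ℝ × F)))
    (hΓc : IsLC (coneMetric gM) Γc (coneSet (ℝ × F)))
    (n : F) (V W : F) :
    DifferentiableAt ℝ (fun ν => h ν V W) n ∧ DifferentiableAt ℝ (fun ν => S ν V W) n := by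
  have hι : ∀ c : ℝ, DifferentiableAt ℝ (fun ν : F => ((1:ℝ), ((c:ℝ), ν))) n :=
    fun c => (differentiableAt_const _).prodMk ((differentiableAt_const _).prodMk differentiableAt_id)
  have key : ∀ c : ℝ, DifferentiableAt ℝ
      (fun ν => h ν V W - Real.sinh (2*c) * S ν V W) n := by
    intro c
    have hd := crc_slice_diff h S gM hh hSsym Send hSend hgM Γc hΓc
      ((1:ℝ), ((c:ℝ), n)) one_pos V W
    have := hd.comp n (hι c)
    have feq : ((fun y : ℝ × (ℝ × F) => coneMetric gM y (0, (1, V)) (0, (0, W))) ∘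
        (fun ν : F => ((1:ℝ), ((c:ℝ), ν))))
        = fun ν => h ν V W - Real.sinh (2*c) * S ν V W := by
      funext ν
      simp only [Function.comp, coneMetric, hgM]
      ring
    rwa [feq] at this
  have hdh : DifferentiableAt ℝ (fun ν => h ν V W) n := by
    have := key 0
    simp only [mul_zero, Real.sinh_zero, zero_mul, sub_zero] at this
    exact this
  refine ⟨hdh, ?_⟩
  have h1 := key (Real.arsinh 1 / 2)
  rw [show (2*(Real.arsinh 1 / 2)) = Real.arsinh 1 by ring, Real.sinh_arsinh] at h1
  have : DifferentiableAt ℝ (fun ν => h ν V W - (h ν V W - 1 * S ν V W)) n := hdh.sub h1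
  simpa using this

end Aux4

section Aux5
variable {F : Type*} [NormedAddCommGroup F] [NormedSpace ℝ F]
variable (h : F → F → F → ℝ) (S : F → F → F → ℝ)
variable (gM : (ℝ × F) → (ℝ × F) → (ℝ × F) → ℝ)

lemma crc_slice_fderiv
    (hgM : ∀ (x : ℝ × F) (u v : ℝ × F),
        gM x u v = -(u.1 * v.1) + h x.2 u.2 v.2
          - Real.sinh (2 * x.1) * S x.2 u.2 v.2)
    (Hd : ∀ (n : F) (V W : F), DifferentiableAt ℝ (fun ν => h ν V W) n)
    (Sd : ∀ (n : F) (V W : F), DifferentiableAt ℝ (fun ν => S ν V W) n)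
    (p : ℝ × (ℝ × F)) (v w u : ℝ × (ℝ × F)) :
    fderiv ℝ (fun y => coneMetric gM y v w) p u
      = 2*p.1*u.1 * (-(v.2.1*w.2.1) + h p.2.2 v.2.2 w.2.2
            - Real.sinh (2*p.2.1) * S p.2.2 v.2.2 w.2.2)
        + p.1^2 * ( fderiv ℝ (fun ν => h ν v.2.2 w.2.2) p.2.2 u.2.2
            - 2*Real.cosh (2*p.2.1)*u.2.1 * S p.2.2 v.2.2 w.2.2
            - Real.sinh (2*p.2.1) * fderiv ℝ (fun ν => S ν v.2.2 w.2.2) p.2.2 u.2.2 ) := by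
  have feq : (fun y => coneMetric gM y v w)
      = fun y : ℝ × (ℝ × F) => v.1*w.1 + (y.1*y.1) *
          (-(v.2.1*w.2.1) + h y.2.2 v.2.2 w.2.2
            - Real.sinh (2*y.2.1) * S y.2.2 v.2.2 w.2.2) := by
    funext y; simp only [coneMetric, hgM]; ring
  rw [feq]
  set P1 : (ℝ × (ℝ × F)) →L[ℝ] ℝ := ContinuousLinearMap.fst ℝ ℝ (ℝ × F) with hP1
  set P2 : (ℝ × (ℝ × F)) →L[ℝ] ℝ :=
    (ContinuousLinearMap.fst ℝ ℝ F).comp (ContinuousLinearMap.snd ℝ ℝ (ℝ × F)) with hP2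
  set P3 : (ℝ × (ℝ × F)) →L[ℝ] F :=
    (ContinuousLinearMap.snd ℝ ℝ F).comp (ContinuousLinearMap.snd ℝ ℝ (ℝ × F)) with hP3
  have H1 : HasFDerivAt (fun y : ℝ × (ℝ × F) => y.1) P1 p := hasFDerivAt_fst
  have H2 : HasFDerivAt (fun y : ℝ × (ℝ × F) => y.2.1) P2 p :=
    hasFDerivAt_fst.comp p hasFDerivAt_snd
  have H3 : HasFDerivAt (fun y : ℝ × (ℝ × F) => y.2.2) P3 p :=
    hasFDerivAt_snd.comp p hasFDerivAt_snd
  have Hh : HasFDerivAt (fun y : ℝ × (ℝ × F) => h y.2.2 v.2.2 w.2.2)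
      ((fderiv ℝ (fun ν => h ν v.2.2 w.2.2) p.2.2).comp P3) p :=
    by have := ((Hd p.2.2 v.2.2 w.2.2).hasFDerivAt).comp p H3; exact this
  have HS : HasFDerivAt (fun y : ℝ × (ℝ × F) => S y.2.2 v.2.2 w.2.2)
      ((fderiv ℝ (fun ν => S ν v.2.2 w.2.2) p.2.2).comp P3) p :=
    by have := ((Sd p.2.2 v.2.2 w.2.2).hasFDerivAt).comp p H3; exact this
  have Hlin : HasFDerivAt (fun y : ℝ × (ℝ × F) => 2*y.2.1) ((2:ℝ) • P2) p :=
    H2.const_mul 2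
  have Hsinh : HasFDerivAt (fun y : ℝ × (ℝ × F) => Real.sinh (2*y.2.1))
      (Real.cosh (2*p.2.1) • ((2:ℝ) • P2)) p :=
    by have := (Real.hasDerivAt_sinh (2*p.2.1)).comp_hasFDerivAt p Hlin; exact this
  have HG : HasFDerivAt (fun y : ℝ × (ℝ × F) =>
      -(v.2.1*w.2.1) + h y.2.2 v.2.2 w.2.2
        - Real.sinh (2*y.2.1) * S y.2.2 v.2.2 w.2.2)
      (((fderiv ℝ (fun ν => h ν v.2.2 w.2.2) p.2.2).comp P3)
        - (Real.sinh (2*p.2.1) • ((fderiv ℝ (fun ν => S ν v.2.2 w.2.2) p.2.2).comp P3)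
            + S p.2.2 v.2.2 w.2.2 • (Real.cosh (2*p.2.1) • ((2:ℝ) • P2)))) p :=
    (Hh.const_add _).sub (Hsinh.mul HS)
  have Htot := ((H1.mul H1).mul HG).const_add (v.1*w.1)
  erw [Htot.fderiv]
  simp only [ContinuousLinearMap.add_apply, ContinuousLinearMap.smul_apply,
    ContinuousLinearMap.sub_apply, ContinuousLinearMap.comp_apply,
    ContinuousLinearMap.coe_fst', ContinuousLinearMap.coe_snd',
    smul_eq_mul, hP1, hP2, hP3]
  simp only [Pi.mul_apply]
  ring

end Aux5

section Aux6
variable {F : Type*} [NormedAddCommGroup F] [NormedSpace ℝ F]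
variable (h : F → F → F → ℝ) (S : F → F → F → ℝ)

lemma crc_T_fderiv
    (Hd : ∀ (n : F) (V W : F), DifferentiableAt ℝ (fun ν => h ν V W) n)
    (Sd : ∀ (n : F) (V W : F), DifferentiableAt ℝ (fun ν => S ν V W) n)
    (p : ℝ × (ℝ × F)) (v w u : ℝ × (ℝ × F)) :
    fderiv ℝ (fun y : ℝ × (ℝ × F) =>
        -(Real.sinh (2*y.2.1)) * (v.1*w.1 + y.1^2*(v.2.1*w.2.1))
          - y.1*Real.cosh (2*y.2.1)*(v.1*w.2.1 + w.1*v.2.1)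
          - y.1^2*(S y.2.2 v.2.2 w.2.2 + Real.sinh (2*y.2.1) * h y.2.2 v.2.2 w.2.2)) p u
      = -(2*Real.cosh (2*p.2.1)*u.2.1) * (v.1*w.1 + p.1^2*(v.2.1*w.2.1))
          - Real.sinh (2*p.2.1)*(2*p.1*u.1*(v.2.1*w.2.1))
        - (u.1*Real.cosh (2*p.2.1) + 2*p.1*Real.sinh (2*p.2.1)*u.2.1)
            *(v.1*w.2.1 + w.1*v.2.1)
        - 2*p.1*u.1*(S p.2.2 v.2.2 w.2.2 + Real.sinh (2*p.2.1) * h p.2.2 v.2.2 w.2.2)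
        - p.1^2*( fderiv ℝ (fun ν => S ν v.2.2 w.2.2) p.2.2 u.2.2
            + 2*Real.cosh (2*p.2.1)*u.2.1 * h p.2.2 v.2.2 w.2.2
            + Real.sinh (2*p.2.1) * fderiv ℝ (fun ν => h ν v.2.2 w.2.2) p.2.2 u.2.2 ) := by
  set P1 : (ℝ × (ℝ × F)) →L[ℝ] ℝ := ContinuousLinearMap.fst ℝ ℝ (ℝ × F) with hP1
  set P2 : (ℝ × (ℝ × F)) →L[ℝ] ℝ :=
    (ContinuousLinearMap.fst ℝ ℝ F).comp (ContinuousLinearMap.snd ℝ ℝ (ℝ × F)) with hP2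
  set P3 : (ℝ × (ℝ × F)) →L[ℝ] F :=
    (ContinuousLinearMap.snd ℝ ℝ F).comp (ContinuousLinearMap.snd ℝ ℝ (ℝ × F)) with hP3
  have H1 : HasFDerivAt (fun y : ℝ × (ℝ × F) => y.1) P1 p := hasFDerivAt_fst
  have H2 : HasFDerivAt (fun y : ℝ × (ℝ × F) => y.2.1) P2 p :=
    hasFDerivAt_fst.comp p hasFDerivAt_snd
  have H3 : HasFDerivAt (fun y : ℝ × (ℝ × F) => y.2.2) P3 p :=
    hasFDerivAt_snd.comp p hasFDerivAt_snd
  have Hh : HasFDerivAt (fun y : ℝ × (ℝ × F) => h y.2.2 v.2.2 w.2.2)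
      ((fderiv ℝ (fun ν => h ν v.2.2 w.2.2) p.2.2).comp P3) p :=
    by have := ((Hd p.2.2 v.2.2 w.2.2).hasFDerivAt).comp p H3; exact this
  have HS : HasFDerivAt (fun y : ℝ × (ℝ × F) => S y.2.2 v.2.2 w.2.2)
      ((fderiv ℝ (fun ν => S ν v.2.2 w.2.2) p.2.2).comp P3) p :=
    by have := ((Sd p.2.2 v.2.2 w.2.2).hasFDerivAt).comp p H3; exact this
  have Hlin : HasFDerivAt (fun y : ℝ × (ℝ × F) => 2*y.2.1) ((2:ℝ) • P2) p :=
    H2.const_mul 2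
  have Hsinh : HasFDerivAt (fun y : ℝ × (ℝ × F) => Real.sinh (2*y.2.1))
      (Real.cosh (2*p.2.1) • ((2:ℝ) • P2)) p :=
    by have := (Real.hasDerivAt_sinh (2*p.2.1)).comp_hasFDerivAt p Hlin; exact this
  have Hcosh : HasFDerivAt (fun y : ℝ × (ℝ × F) => Real.cosh (2*y.2.1))
      (Real.sinh (2*p.2.1) • ((2:ℝ) • P2)) p :=
    by have := (Real.hasDerivAt_cosh (2*p.2.1)).comp_hasFDerivAt p Hlin; exact this
  have feq : (fun y : ℝ × (ℝ × F) =>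
        -(Real.sinh (2*y.2.1)) * (v.1*w.1 + y.1^2*(v.2.1*w.2.1))
          - y.1*Real.cosh (2*y.2.1)*(v.1*w.2.1 + w.1*v.2.1)
          - y.1^2*(S y.2.2 v.2.2 w.2.2 + Real.sinh (2*y.2.1) * h y.2.2 v.2.2 w.2.2))
      = (fun y : ℝ × (ℝ × F) =>
          -(Real.sinh (2*y.2.1) * (v.1*w.1 + (y.1*y.1)*(v.2.1*w.2.1)))
          - (y.1*Real.cosh (2*y.2.1))*(v.1*w.2.1 + w.1*v.2.1)
          - (y.1*y.1)*(S y.2.2 v.2.2 w.2.2 + Real.sinh (2*y.2.1) * h y.2.2 v.2.2 w.2.2)) := by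
    funext y; ring
  rw [feq]
  have Ht1 : HasFDerivAt (fun y : ℝ × (ℝ × F) =>
      v.1*w.1 + (y.1*y.1)*(v.2.1*w.2.1))
      (((v.2.1*w.2.1) • (p.1 • P1 + p.1 • P1)) : _) p := by
    have := ((H1.mul H1).mul_const (v.2.1*w.2.1)).const_add (v.1*w.1)
    exact this
  have HA := (Hsinh.mul Ht1).neg
  have HB := (H1.mul Hcosh).mul_const (v.1*w.2.1 + w.1*v.2.1)
  have HC := (H1.mul H1).mul (HS.add (Hsinh.mul Hh))
  have Htot := (HA.sub HB).sub HC
  erw [Htot.fderiv]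
  simp only [ContinuousLinearMap.add_apply, ContinuousLinearMap.smul_apply,
    ContinuousLinearMap.sub_apply, ContinuousLinearMap.neg_apply,
    ContinuousLinearMap.comp_apply, ContinuousLinearMap.coe_fst',
    ContinuousLinearMap.coe_snd', smul_eq_mul, hP1, hP2, hP3]
  simp only [Pi.mul_apply, Pi.add_apply]
  ring

end Aux6

section Aux7
variable {F : Type*} [NormedAddCommGroup F] [NormedSpace ℝ F]

/-- the parallel complex structure on the cone -/
def crcTend (Send : F → F → F) : (ℝ × (ℝ × F)) → (ℝ × (ℝ × F)) → (ℝ × (ℝ × F)) :=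
  fun p v => (-(Real.sinh (2*p.2.1))*v.1 - p.1*Real.cosh (2*p.2.1)*v.2.1,
    (Real.cosh (2*p.2.1)/p.1*v.1 + Real.sinh (2*p.2.1)*v.2.1, -Send p.2.2 v.2.2))

/-- the parallel symmetric tensor on the cone -/
def crcT (h S : F → F → F → ℝ) : (ℝ × (ℝ × F)) → (ℝ × (ℝ × F)) → (ℝ × (ℝ × F)) → ℝ :=
  fun p u v => -(Real.sinh (2*p.2.1)) * (u.1*v.1 + p.1^2*(u.2.1*v.2.1))
    - p.1*Real.cosh (2*p.2.1)*(u.1*v.2.1 + v.1*u.2.1)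
    - p.1^2*(S p.2.2 u.2.2 v.2.2 + Real.sinh (2*p.2.1) * h p.2.2 u.2.2 v.2.2)

variable (h : F → F → F → ℝ) (S : F → F → F → ℝ)
variable (gM : (ℝ × F) → (ℝ × F) → (ℝ × F) → ℝ)

lemma crc_SJ (hh : IsMetric h) (Send : F → F → F)
    (hSend : ∀ n u v, S n u v = h n u (Send n v))
    (hS2 : ∀ n u, Send n (Send n u) = -u) (n : F) (z x : F) :
    S n z (Send n x) = -(h n z x) := by
  rw [hSend n z (Send n x), hS2, ((hh n).1 z).map_neg]

lemma crc_Sneg2 (hh : IsMetric h) (hSsym : ∀ n u v, S n u v = S n v u)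
    (Send : F → F → F)
    (hSend : ∀ n u v, S n u v = h n u (Send n v)) (n : F) (z x : F) :
    S n z (-x) = -(S n z x) := by
  rw [hSsym n z (-x), hSsym n z x]
  exact (crc_Slin1 h S hh Send hSend n z).map_neg x

lemma crc_Sendneg (hh : IsMetric h) (hhnd : Nondeg h Set.univ)
    (hSsym : ∀ n u v, S n u v = S n v u)
    (Send : F → F → F)
    (hSend : ∀ n u v, S n u v = h n u (Send n v)) (n : F) (x : F) :
    Send n (-x) = -(Send n x) := by
  have key : Send n (-x) + Send n x = 0 := by
    apply hhnd n (Set.mem_univ n)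
    intro v
    rw [(hh n).2.2, ((hh n).1 v).map_add, ← hSend, ← hSend,
      crc_Sneg2 h S hh hSsym Send hSend]
    ring
  linear_combination (norm := abel) key

/-- bullet (a) -/
lemma crc_Ta (hh : IsMetric h) (hSsym : ∀ n u v, S n u v = S n v u)
    (Send : F → F → F)
    (hSend : ∀ n u v, S n u v = h n u (Send n v))
    (hS2 : ∀ n u, Send n (Send n u) = -u)
    (hgM : ∀ (x : ℝ × F) (u v : ℝ × F),
        gM x u v = -(u.1 * v.1) + h x.2 u.2 v.2
          - Real.sinh (2 * x.1) * S x.2 u.2 v.2) :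
    ∀ p u v, crcT h S p u v = coneMetric gM p u (crcTend Send p v) := by
  intro p u v
  have e1 : h p.2.2 u.2.2 (-Send p.2.2 v.2.2) = -(S p.2.2 u.2.2 v.2.2) := by
    rw [((hh p.2.2).1 u.2.2).map_neg, ← hSend]
  have e2 : S p.2.2 u.2.2 (-Send p.2.2 v.2.2) = h p.2.2 u.2.2 v.2.2 := by
    rw [crc_Sneg2 h S hh hSsym Send hSend, crc_SJ h S hh Send hSend hS2]; ring
  simp only [crcT, crcTend, coneMetric, hgM, e1, e2]
  rcases eq_or_ne p.1 0 with h0 | h0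
  · rw [h0]; ring_nf
  · field_simp
    ring

/-- bullet (b) -/
lemma crc_Tb (hh : IsMetric h) (hSsym : ∀ n u v, S n u v = S n v u) :
    ∀ p u v, crcT h S p u v = crcT h S p v u := by
  intro p u v
  simp only [crcT]
  rw [hSsym p.2.2 u.2.2 v.2.2, (hh p.2.2).2.2 u.2.2 v.2.2]
  ring

/-- bullet (e) -/
lemma crc_Te (hh : IsMetric h) (hhnd : Nondeg h Set.univ)
    (hSsym : ∀ n u v, S n u v = S n v u)
    (Send : F → F → F)
    (hSend : ∀ n u v, S n u v = h n u (Send n v))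
    (hS2 : ∀ n u, Send n (Send n u) = -u) :
    ∀ p : ℝ × (ℝ × F), 0 < p.1 → ∀ u,
      crcTend Send p (crcTend Send p u) = -u := by
  intro p hp u
  have hr : p.1 ≠ 0 := ne_of_gt hp
  have hcs : Real.cosh (2*p.2.1)^2 = Real.sinh (2*p.2.1)^2 + 1 := Real.cosh_sq _
  have h3 : -Send p.2.2 (-Send p.2.2 u.2.2) = -u.2.2 := by
    rw [crc_Sendneg h S hh hhnd hSsym Send hSend, hS2, neg_neg]
  simp only [crcTend]
  refine Prod.ext ?_ (Prod.ext ?_ ?_)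
  · show -(Real.sinh (2*p.2.1))*_ - _ = (-u).1
    rw [Prod.fst_neg]
    field_simp
    linear_combination (-u.1) * hcs
  · show _ + _ = (-u).2.1
    rw [Prod.snd_neg, Prod.fst_neg]
    field_simp
    linear_combination (-(u.2.1) * p.1) * hcs
  · show -Send p.2.2 (-Send p.2.2 u.2.2) = (-u).2.2
    rw [Prod.snd_neg, Prod.snd_neg]
    exact h3

end Aux7

section Aux8
variable {F : Type*} [NormedAddCommGroup F] [NormedSpace ℝ F]
variable (h : F → F → F → ℝ) (S : F → F → F → ℝ)
variable (gM : (ℝ × F) → (ℝ × F) → (ℝ × F) → ℝ)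

lemma crc_nondeg (hh : IsMetric h) (hhnd : Nondeg h Set.univ)
    (hSsym : ∀ n u v, S n u v = S n v u)
    (Send : F → F → F)
    (hSend : ∀ n u v, S n u v = h n u (Send n v))
    (hS2 : ∀ n u, Send n (Send n u) = -u)
    (hgM : ∀ (x : ℝ × F) (u v : ℝ × F),
        gM x u v = -(u.1 * v.1) + h x.2 u.2 v.2
          - Real.sinh (2 * x.1) * S x.2 u.2 v.2) :
    Nondeg gM Set.univ := by
  intro x _ u hu
  set lam := Real.sinh (2 * x.1) with hlam
  have hZ2 : ∀ (n : F) (z : F), h n z 0 = 0 := fun n z => ((hh n).1 z).map_zero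
  have SZ2 : ∀ (n : F) (z : F), S n z 0 = 0 := fun n z => by
    rw [hSsym]; exact (crc_Slin1 h S hh Send hSend n z).map_zero
  have h1 : u.1 = 0 := by
    have := hu (1, 0)
    rw [hgM] at this
    simp only [hZ2, SZ2] at this
    simpa using this
  have h2 : ∀ Wv : F, h x.2 u.2 Wv = 0 := by
    intro Wv
    have hden : (1 + lam^2) ≠ 0 := by positivity
    set Vv : F := (1 + lam^2)⁻¹ • (Wv + lam • Send x.2 Wv) with hVv
    have := hu (0, Vv)
    rw [hgM] at this
    simp only [mul_zero, neg_zero, zero_add] at this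
    have hexp : h x.2 u.2 Vv = (1 + lam^2)⁻¹ * (h x.2 u.2 Wv + lam * S x.2 u.2 Wv) := by
      rw [hVv, ((hh x.2).1 u.2).map_smul, ((hh x.2).1 u.2).map_add,
        ((hh x.2).1 u.2).map_smul, ← hSend]
      simp only [smul_eq_mul]; try ring
    have Slin2 : IsLinearMap ℝ (fun z => S x.2 u.2 z) := by
      have : (fun z => S x.2 u.2 z) = fun z => S x.2 z u.2 :=
        funext fun z => hSsym x.2 u.2 z
      rw [this]; exact crc_Slin1 h S hh Send hSend x.2 u.2
    have hexp2 : S x.2 u.2 Vv = (1 + lam^2)⁻¹ * (S x.2 u.2 Wv - lam * h x.2 u.2 Wv) := by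
      rw [hVv, Slin2.map_smul, Slin2.map_add, Slin2.map_smul,
        crc_SJ h S hh Send hSend hS2]
      simp only [smul_eq_mul]; try ring
    rw [hexp, hexp2, ← hlam] at this
    have : (1 + lam^2)⁻¹ * ((1 + lam^2) * h x.2 u.2 Wv) = 0 := by
      rw [← this]; ring
    rwa [inv_mul_cancel_left₀ hden] at this
  have h3 : u.2 = 0 := hhnd x.2 (Set.mem_univ _) u.2 h2
  exact Prod.ext h1 h3

end Aux8

section Aux9
variable {F : Type*} [NormedAddCommGroup F] [NormedSpace ℝ F]
variable (h : F → F → F → ℝ) (S : F → F → F → ℝ)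
variable (gM : (ℝ × F) → (ℝ × F) → (ℝ × F) → ℝ)

lemma crc_Td (hh : IsMetric h) (hhnd : Nondeg h Set.univ)
    (ΓN : F → F → F → F) (hΓN : IsLC h ΓN Set.univ)
    (hSsym : ∀ n u v, S n u v = S n v u)
    (hSpar : ∀ n u v w : F, covTen ΓN S n u v w = 0)
    (Send : F → F → F)
    (hSend : ∀ n u v, S n u v = h n u (Send n v))
    (hS2 : ∀ n u, Send n (Send n u) = -u)
    (hgM : ∀ (x : ℝ × F) (u v : ℝ × F),
        gM x u v = -(u.1 * v.1) + h x.2 u.2 v.2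
          - Real.sinh (2 * x.1) * S x.2 u.2 v.2)
    (Γc : (ℝ × (ℝ × F)) → (ℝ × (ℝ × F)) → (ℝ × (ℝ × F)) → (ℝ × (ℝ × F)))
    (hΓc : IsLC (coneMetric gM) Γc (coneSet (ℝ × F))) :
    ∀ p : ℝ × (ℝ × F), 0 < p.1 → ∀ u v w, covTen Γc (crcT h S) p u v w = 0 := by
  intro p hp u v w
  have hr : p.1 ≠ 0 := ne_of_gt hp
  have Hd : ∀ (n V W : F), DifferentiableAt ℝ (fun ν => h ν V W) n :=
    fun n V W => (crc_hS_diff h S gM hh hSsym Send hSend hgM Γc hΓc n V W).1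
  have Sd : ∀ (n V W : F), DifferentiableAt ℝ (fun ν => S ν V W) n :=
    fun n V W => (crc_hS_diff h S gM hh hSsym Send hSend hgM Γc hΓc n V W).2
  have gsym := crc_gsym h S gM hh hSsym hgM
  have hdh : ∀ (n d V W : F), fderiv ℝ (fun ν => h ν V W) n d
      = h n (ΓN n d V) W + h n V (ΓN n d W) :=
    fun n d V W => hΓN.2 n (Set.mem_univ n) d V W
  have hdS : ∀ (n d V W : F), fderiv ℝ (fun ν => S ν V W) n d
      = S n (ΓN n d V) W + S n V (ΓN n d W) := by
    intro n d V W
    have h0 := hSpar n d V W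
    unfold covTen at h0
    linarith
  have hΓsym : ∀ (n a b : F), ΓN n a b = ΓN n b a :=
    fun n a b => hΓN.1 n (Set.mem_univ n) a b
  have eh : ∀ z y, h p.2.2 z (-Send p.2.2 y) = -(S p.2.2 z y) := fun z y => by
    rw [((hh p.2.2).1 z).map_neg, ← hSend]
  have eS : ∀ z y, S p.2.2 z (-Send p.2.2 y) = h p.2.2 z y := fun z y => by
    rw [crc_Sneg2 h S hh hSsym Send hSend, crc_SJ h S hh Send hSend hS2]; ring
  have k1 := crc_koszul (coneMetric gM) gsym Γc _ hΓc p hp u v (crcTend Send p w)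
  have k2 := crc_koszul (coneMetric gM) gsym Γc _ hΓc p hp u w (crcTend Send p v)
  rw [crc_slice_fderiv h S gM hgM Hd Sd p v (crcTend Send p w) u,
      crc_slice_fderiv h S gM hgM Hd Sd p u (crcTend Send p w) v,
      crc_slice_fderiv h S gM hgM Hd Sd p u v (crcTend Send p w)] at k1
  rw [crc_slice_fderiv h S gM hgM Hd Sd p w (crcTend Send p v) u,
      crc_slice_fderiv h S gM hgM Hd Sd p u (crcTend Send p v) w,
      crc_slice_fderiv h S gM hgM Hd Sd p u w (crcTend Send p v)] at k2
  unfold covTen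
  rw [crc_Tb h S hh hSsym p v (Γc p u w),
      crc_Ta h S gM hh hSsym Send hSend hS2 hgM p (Γc p u v) w,
      crc_Ta h S gM hh hSsym Send hSend hS2 hgM p (Γc p u w) v]
  rw [show (fun y => crcT h S y v w) = (fun y : ℝ × (ℝ × F) =>
        -(Real.sinh (2*y.2.1)) * (v.1*w.1 + y.1^2*(v.2.1*w.2.1))
          - y.1*Real.cosh (2*y.2.1)*(v.1*w.2.1 + w.1*v.2.1)
          - y.1^2*(S y.2.2 v.2.2 w.2.2 + Real.sinh (2*y.2.1) * h y.2.2 v.2.2 w.2.2))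
      from rfl,
    crc_T_fderiv h S Hd Sd p v w u]
  simp only [crcTend] at k1 k2 ⊢
  simp only [hdh, hdS] at k1 k2 ⊢
  rw [hΓsym p.2.2 v.2.2 u.2.2, hΓsym p.2.2 (-Send p.2.2 w.2.2) u.2.2,
      hΓsym p.2.2 (-Send p.2.2 w.2.2) v.2.2] at k1
  rw [hΓsym p.2.2 w.2.2 u.2.2, hΓsym p.2.2 (-Send p.2.2 v.2.2) u.2.2,
      hΓsym p.2.2 (-Send p.2.2 v.2.2) w.2.2] at k2
  simp only [eh, eS] at k1 k2 ⊢
  rw [(hh p.2.2).2.2 (ΓN p.2.2 u.2.2 (-Send p.2.2 w.2.2)) v.2.2,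
      hSsym p.2.2 (ΓN p.2.2 u.2.2 (-Send p.2.2 w.2.2)) v.2.2] at k1
  rw [(hh p.2.2).2.2 (ΓN p.2.2 u.2.2 (-Send p.2.2 v.2.2)) w.2.2,
      hSsym p.2.2 (ΓN p.2.2 u.2.2 (-Send p.2.2 v.2.2)) w.2.2,
      hSsym p.2.2 w.2.2 v.2.2, (hh p.2.2).2.2 w.2.2 v.2.2,
      hSsym p.2.2 (ΓN p.2.2 u.2.2 w.2.2) v.2.2,
      (hh p.2.2).2.2 (ΓN p.2.2 u.2.2 w.2.2) v.2.2] at k2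
  set z3 : ℝ := Real.cosh (2*p.2.1)/p.1*w.1 + Real.sinh (2*p.2.1)*w.2.1 with hz3def
  set z2 : ℝ := Real.cosh (2*p.2.1)/p.1*v.1 + Real.sinh (2*p.2.1)*v.2.1 with hz2def
  have hz3 : p.1 * z3 = Real.cosh (2*p.2.1)*w.1 + p.1*(Real.sinh (2*p.2.1)*w.2.1) := by
    rw [hz3def]; field_simp
  have hz2 : p.1 * z2 = Real.cosh (2*p.2.1)*v.1 + p.1*(Real.sinh (2*p.2.1)*v.2.1) := by
    rw [hz2def]; field_simp
  have hcs : Real.cosh (2*p.2.1)^2 = Real.sinh (2*p.2.1)^2 + 1 := Real.cosh_sq _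
  linear_combination (-(1:ℝ)/2) * k1 + (-(1:ℝ)/2) * k2
    + (-(p.1*w.1*S p.2.2 u.2.2 v.2.2 + p.1*v.1*S p.2.2 u.2.2 w.2.2)) * hcs
    + (u.2.1*v.1 + u.1*v.2.1 - p.1*Real.cosh (2*p.2.1)*S p.2.2 u.2.2 v.2.2) * hz3
    + (u.2.1*w.1 + u.1*w.2.1 - p.1*Real.cosh (2*p.2.1)*S p.2.2 u.2.2 w.2.2) * hz2

end Aux9

/-- if `(N,h)` carries a parallel symmetric 2-tensor `S` with `S̃² = -Id`,
then `g = -ds² + h - sinh(2s)S` on `M = ℝ × N` is nondegenerate, and the cone over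
`(M,g)` admits a nontrivial parallel symmetric 2-tensor `T` with `T̃² = -Id`. -/
theorem complex_riemannian_case_construction
    {F : Type*} [NormedAddCommGroup F] [NormedSpace ℝ F]
    (h : F → F → F → ℝ) (hh : IsMetric h) (hhnd : Nondeg h Set.univ)
    (ΓN : F → F → F → F) (hΓN : IsLC h ΓN Set.univ)
    (S : F → F → F → ℝ)
    (hSsym : ∀ n u v, S n u v = S n v u)
    (hSpar : ∀ n u v w : F, covTen ΓN S n u v w = 0)
    (Send : F → F → F)
    (hSend : ∀ n u v, S n u v = h n u (Send n v))
    (hS2 : ∀ n u, Send n (Send n u) = -u)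
    (gM : (ℝ × F) → (ℝ × F) → (ℝ × F) → ℝ)
    (hgM : ∀ (x : ℝ × F) (u v : ℝ × F),
        gM x u v = -(u.1 * v.1) + h x.2 u.2 v.2
          - Real.sinh (2 * x.1) * S x.2 u.2 v.2) :
    Nondeg gM Set.univ ∧
    (∀ Γc : (ℝ × (ℝ × F)) → (ℝ × (ℝ × F)) → (ℝ × (ℝ × F)) → (ℝ × (ℝ × F)),
      IsLC (coneMetric gM) Γc (coneSet (ℝ × F)) →
      ∃ (T : (ℝ × (ℝ × F)) → (ℝ × (ℝ × F)) → (ℝ × (ℝ × F)) → ℝ)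
        (Tend : (ℝ × (ℝ × F)) → (ℝ × (ℝ × F)) → (ℝ × (ℝ × F))),
        (∀ p u v, T p u v = coneMetric gM p u (Tend p v)) ∧
        (∀ p u v, T p u v = T p v u) ∧
        (∃ p : ℝ × (ℝ × F), 0 < p.1 ∧ ∃ u v, T p u v ≠ 0) ∧
        (∀ p : ℝ × (ℝ × F), 0 < p.1 → ∀ u v w, covTen Γc T p u v w = 0) ∧
        (∀ p : ℝ × (ℝ × F), 0 < p.1 → ∀ u, Tend p (Tend p u) = -u)) := by
  constructor
  · exact crc_nondeg h S gM hh hhnd hSsym Send hSend hS2 hgM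
  · intro Γc hΓc
    refine ⟨crcT h S, crcTend Send,
      crc_Ta h S gM hh hSsym Send hSend hS2 hgM,
      crc_Tb h S hh hSsym, ?_,
      crc_Td h S gM hh hhnd ΓN hΓN hSsym hSpar Send hSend hS2 hgM Γc hΓc,
      crc_Te h S hh hhnd hSsym Send hSend hS2⟩
    refine ⟨(1, (0, 0)), one_pos, (1, (0, 0)), (0, (1, 0)), ?_⟩
    have SZ : S (0:F) (0:F) (0:F) = 0 :=
      (crc_Slin1 h S hh Send hSend (0:F) (0:F)).map_zero
    simp only [crcT, SZ]
    norm_num [Real.sinh_zero, Real.cosh_zero]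
end
end

section
/- Let (N,h) be a pseudo-Riemannian manifold with a parallel symmetric 2-tensor S whose endomorphism is a projection (S̃² = S̃). On M := (0, π/2) × N define g = ds² + sin²(s)(h - S) + cos²(s)S. Then g is nondegenerate and the cone over (M,g) is decomposable: it admits a parallel symmetric 2-tensor T with T̃² = T̃, with associated Obata function α(s,n) = cos²(s). -/
noncomputable section

lemma dirderiv {E G : Type*} [NormedAddCommGroup E] [NormedSpace ℝ E]
    [NormedAddCommGroup G] [NormedSpace ℝ G]
    (f : E → G) (p u : E) (V : G) (hf : DifferentiableAt ℝ f p)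
    (hV : HasDerivAt (fun t : ℝ => f (p + t • u)) V 0) : fderiv ℝ f p u = V := by
  have hline : HasDerivAt (fun t : ℝ => p + t • u) u 0 := by
    simpa using ((hasDerivAt_id (0:ℝ)).smul_const u).const_add p
  have h0 : p + (0:ℝ) • u = p := by simp
  have hF : HasFDerivAt f (fderiv ℝ f p) ((fun t : ℝ => p + t • u) 0) := by
    simpa [h0] using hf.hasFDerivAt
  exact (hF.comp_hasDerivAt 0 hline).unique hV

/-- The parallel symmetric 2-tensor on the cone: `T = d(r cos s)² + (r cos s)² S`. -/
def Tcone {F : Type*} [NormedAddCommGroup F] [NormedSpace ℝ F]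
    (S : F → F → F → ℝ) : (ℝ × (ℝ × F)) → (ℝ × (ℝ × F)) → (ℝ × (ℝ × F)) → ℝ :=
  fun p u v =>
    (u.1*Real.cos p.2.1 - p.1*Real.sin p.2.1*u.2.1)
      * (v.1*Real.cos p.2.1 - p.1*Real.sin p.2.1*v.2.1)
    + (p.1*Real.cos p.2.1)^2 * S p.2.2 u.2.2 v.2.2

/-- The associated endomorphism field (orthogonal projection). -/
def TendC {F : Type*} [NormedAddCommGroup F] [NormedSpace ℝ F]
    (Send : F → F → F) : (ℝ × (ℝ × F)) → (ℝ × (ℝ × F)) → (ℝ × (ℝ × F)) :=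
  fun p v =>
    (Real.cos p.2.1 * (v.1*Real.cos p.2.1 - p.1*Real.sin p.2.1*v.2.1),
      (-(Real.sin p.2.1 * (v.1*Real.cos p.2.1 - p.1*Real.sin p.2.1*v.2.1)) / p.1,
        Send p.2.2 v.2.2))

set_option maxHeartbeats 2000000 in
/-- if `(N,h)` carries a parallel symmetric 2-tensor `S` with `S̃² = S̃`,
then `g = ds² + sin²(s)(h - S) + cos²(s)S` on `M = (0, π/2) × N` is nondegenerate, and
the cone over `(M,g)` is decomposable: it admits a parallel symmetric 2-tensor `T`
with `T̃² = T̃` and associated Obata function `α(s,n) = cos²(s)`. -/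
theorem decomposable_case_construction
    {F : Type*} [NormedAddCommGroup F] [NormedSpace ℝ F]
    (h : F → F → F → ℝ) (hh : IsMetric h) (hhnd : Nondeg h Set.univ)
    (ΓN : F → F → F → F) (hΓN : IsLC h ΓN Set.univ)
    (S : F → F → F → ℝ)
    (hSsym : ∀ n u v, S n u v = S n v u)
    (hSpar : ∀ n u v w : F, covTen ΓN S n u v w = 0)
    (Send : F → F → F)
    (hSend : ∀ n u v, S n u v = h n u (Send n v))
    (hS2 : ∀ n u, Send n (Send n u) = Send n u)
    (gM : (ℝ × F) → (ℝ × F) → (ℝ × F) → ℝ)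
    (hgM : ∀ (x : ℝ × F) (u v : ℝ × F),
        gM x u v = u.1 * v.1
          + Real.sin x.1 ^ 2 * (h x.2 u.2 v.2 - S x.2 u.2 v.2)
          + Real.cos x.1 ^ 2 * S x.2 u.2 v.2) :
    Nondeg gM {x : ℝ × F | x.1 ∈ Set.Ioo 0 (Real.pi / 2)} ∧
    (∀ Γc : (ℝ × (ℝ × F)) → (ℝ × (ℝ × F)) → (ℝ × (ℝ × F)) → (ℝ × (ℝ × F)),
      IsLC (coneMetric gM) Γc
          {p : ℝ × (ℝ × F) | 0 < p.1 ∧ p.2.1 ∈ Set.Ioo 0 (Real.pi / 2)} →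
      ∃ (T : (ℝ × (ℝ × F)) → (ℝ × (ℝ × F)) → (ℝ × (ℝ × F)) → ℝ)
        (Tend : (ℝ × (ℝ × F)) → (ℝ × (ℝ × F)) → (ℝ × (ℝ × F))),
        (∀ p u v, T p u v = coneMetric gM p u (Tend p v)) ∧
        (∀ p u v, T p u v = T p v u) ∧
        (∃ p : ℝ × (ℝ × F), (0 < p.1 ∧ p.2.1 ∈ Set.Ioo 0 (Real.pi / 2)) ∧
            ∃ u v, T p u v ≠ 0) ∧
        (∀ p : ℝ × (ℝ × F), 0 < p.1 → p.2.1 ∈ Set.Ioo 0 (Real.pi / 2) →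
            ∀ u v w, covTen Γc T p u v w = 0) ∧
        (∀ p : ℝ × (ℝ × F), 0 < p.1 → p.2.1 ∈ Set.Ioo 0 (Real.pi / 2) →
            ∀ u, Tend p (Tend p u) = Tend p u) ∧
        (∀ p : ℝ × (ℝ × F), 0 < p.1 → p.2.1 ∈ Set.Ioo 0 (Real.pi / 2) →
            T p ((1 : ℝ), (0 : ℝ × F)) ((1 : ℝ), (0 : ℝ × F)) = Real.cos p.2.1 ^ 2)) := by
  -- ===== basic algebraic facts =====
  have hsym : ∀ m α β, h m α β = h m β α := fun m => (hh m).2.2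
  have hzero1 : ∀ (m : F) (β : F), h m 0 β = 0 := fun m β => ((hh m).2.1 β).map_zero
  have hzero2 : ∀ (m : F) (α : F), h m α 0 = 0 := fun m α => ((hh m).1 α).map_zero
  have Szero1 : ∀ (m : F) (β : F), S m 0 β = 0 := fun m β => by
    rw [hSend]; exact hzero1 m _
  have Szero2 : ∀ (m : F) (α : F), S m α 0 = 0 := fun m α => by
    rw [hSsym]; exact Szero1 m α
  have SSend2 : ∀ m α β, S m α (Send m β) = S m α β := fun m α β => by
    rw [hSend m α (Send m β), hS2, ← hSend]
  have hSend2 : ∀ m α β, h m α (Send m β) = S m α β := fun m α β => (hSend m α β).symm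
  have hΓNsym : ∀ (m : F) (x y : F), ΓN m x y = ΓN m y x := fun m => hΓN.1 m trivial
  have hpy : ∀ s : ℝ, Real.sin s ^ 2 + Real.cos s ^ 2 = 1 := Real.sin_sq_add_cos_sq
  constructor
  · -- ===== nondegeneracy of gM =====
    intro x hx u hu
    simp only [Set.mem_setOf_eq, Set.mem_Ioo] at hx
    have hcpos : 0 < Real.cos x.1 := Real.cos_pos_of_mem_Ioo
      ⟨by linarith [Real.pi_pos, hx.1], hx.2⟩
    have hspos : 0 < Real.sin x.1 := Real.sin_pos_of_pos_of_lt_pi hx.1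
      (by linarith [Real.pi_pos])
    have h1 := hu (u.1, 0)
    rw [hgM] at h1
    simp only [hzero2, Szero2] at h1
    have hu1 : u.1 = 0 := by
      have : u.1 * u.1 = 0 := by linarith
      exact mul_self_eq_zero.mp this
    have h2 : ∀ V : F, Real.sin x.1 ^ 2 * (h x.2 u.2 V - S x.2 u.2 V)
        + Real.cos x.1 ^ 2 * S x.2 u.2 V = 0 := fun V => by
      have := hu (0, V)
      rw [hgM] at this
      simpa [hu1] using this
    have hSUV : ∀ V, S x.2 u.2 V = 0 := fun V => by
      have h3 := h2 (Send x.2 V)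
      rw [hSend2, SSend2] at h3
      have h4 : Real.cos x.1 ^ 2 * S x.2 u.2 V = 0 := by linarith
      rcases mul_eq_zero.mp h4 with hc | hs
      · exact absurd hc (by positivity)
      · exact hs
    have hhUV : ∀ V, h x.2 u.2 V = 0 := fun V => by
      have h3 := h2 V
      rw [hSUV] at h3
      have h4 : Real.sin x.1 ^ 2 * h x.2 u.2 V = 0 := by linarith
      rcases mul_eq_zero.mp h4 with hc | hs
      · exact absurd hc (by positivity)
      · exact hs
    exact Prod.ext hu1 (hhnd x.2 trivial u.2 hhUV)
  -- ===== the cone part =====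
  intro Γc hΓc
  -- Step 1 : differentiability of the fiber metric coefficients
  have hGdiff : ∀ (p : ℝ × (ℝ × F)), 0 < p.1 → p.2.1 ∈ Set.Ioo 0 (Real.pi / 2) → ∀ Y Z : F,
      DifferentiableAt ℝ
        (fun y : ℝ × (ℝ × F) => coneMetric gM y ((0:ℝ),((0:ℝ),Y)) ((0:ℝ),((0:ℝ),Z))) p := by
    intro p hp1 hp2 Y Z
    by_contra hnd
    have hC := hΓc.2 p ⟨hp1, hp2⟩
    have E24 : (fun y : ℝ × (ℝ × F) => coneMetric gM y ((0:ℝ),((1:ℝ),Y)) ((0:ℝ),((0:ℝ),Z)))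
        = (fun y => coneMetric gM y ((0:ℝ),((0:ℝ),Y)) ((0:ℝ),((0:ℝ),Z))) := by
      funext y; simp [coneMetric, hgM]
    have E34 : (fun y : ℝ × (ℝ × F) => coneMetric gM y ((0:ℝ),((0:ℝ),Y)) ((0:ℝ),((1:ℝ),Z)))
        = (fun y => coneMetric gM y ((0:ℝ),((0:ℝ),Y)) ((0:ℝ),((0:ℝ),Z))) := by
      funext y; simp [coneMetric, hgM]
    have E14 : (fun y : ℝ × (ℝ × F) => coneMetric gM y ((0:ℝ),((1:ℝ),Y)) ((0:ℝ),((1:ℝ),Z)))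
        = (fun y => y.1^2 + coneMetric gM y ((0:ℝ),((0:ℝ),Y)) ((0:ℝ),((0:ℝ),Z))) := by
      funext y; simp [coneMetric, hgM]; ring
    have F4 : fderiv ℝ (fun y => coneMetric gM y ((0:ℝ),((0:ℝ),Y)) ((0:ℝ),((0:ℝ),Z))) p = 0 :=
      fderiv_zero_of_not_differentiableAt hnd
    have F1 : fderiv ℝ (fun y => coneMetric gM y ((0:ℝ),((1:ℝ),Y)) ((0:ℝ),((1:ℝ),Z))) p = 0 := by
      rw [E14]
      refine fderiv_zero_of_not_differentiableAt fun hd => hnd ?_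
      have := hd.sub (differentiableAt_fst.pow 2)
      simpa [Pi.sub_def, Pi.pow_def] using this
    have P1 := hC ((1:ℝ),((0:ℝ),(0:F))) ((0:ℝ),((1:ℝ),Y)) ((0:ℝ),((1:ℝ),Z))
    rw [F1] at P1
    have P2 := hC ((1:ℝ),((0:ℝ),(0:F))) ((0:ℝ),((0:ℝ),Y)) ((0:ℝ),((0:ℝ),Z))
    rw [F4] at P2
    have P3 := hC ((1:ℝ),((0:ℝ),(0:F))) ((0:ℝ),((1:ℝ),Y)) ((0:ℝ),((0:ℝ),Z))
    rw [E24, F4] at P3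
    have P4 := hC ((1:ℝ),((0:ℝ),(0:F))) ((0:ℝ),((0:ℝ),Y)) ((0:ℝ),((1:ℝ),Z))
    rw [E34, F4] at P4
    have hb : HasDerivAt (fun t : ℝ => p.1 + t * 1) (1:ℝ) 0 := by
      simpa using ((hasDerivAt_id (0:ℝ)).mul_const (1:ℝ)).const_add p.1
    have hstar : ∀ x : ℝ × (ℝ × F),
        x.2.1 * (2*p.1) = coneMetric gM p (Γc p ((1:ℝ),((0:ℝ),(0:F))) ((0:ℝ),((1:ℝ),(0:F)))) x
          + coneMetric gM p ((0:ℝ),((1:ℝ),(0:F))) (Γc p ((1:ℝ),((0:ℝ),(0:F))) x) := by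
      intro x
      rw [← hC ((1:ℝ),((0:ℝ),(0:F))) ((0:ℝ),((1:ℝ),(0:F))) x]
      have Ee : (fun y : ℝ × (ℝ × F) => coneMetric gM y ((0:ℝ),((1:ℝ),(0:F))) x)
          = fun y => x.2.1 * y.1^2 := by
        funext y; simp [coneMetric, hgM, hzero1, Szero1]; ring
      rw [Ee]
      have hgoal : HasDerivAt (fun t : ℝ => x.2.1 * (p.1 + t * 1)^2)
          (x.2.1*(2*(p.1+0*1)^1*1)) 0 := (hb.pow 2).const_mul _
      have hd := dirderiv (fun y : ℝ × (ℝ × F) => x.2.1 * y.1^2) p ((1:ℝ),((0:ℝ),(0:F)))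
          (x.2.1*(2*(p.1+0*1)^1*1))
          ((differentiableAt_fst.pow 2).const_mul x.2.1)
          (by simpa [Prod.fst_add, Prod.smul_fst, smul_eq_mul] using hgoal)
      rw [hd]
      norm_num
    have Qe1 := hstar ((0:ℝ),((1:ℝ),(0:F)))
    have Qv := hstar ((0:ℝ),((1:ℝ),Y))
    have Qw := hstar ((0:ℝ),((1:ℝ),Z))
    have QY := hstar ((0:ℝ),((0:ℝ),Y))
    have QZ := hstar ((0:ℝ),((0:ℝ),Z))
    simp only [coneMetric, hgM, hzero1, hzero2, Szero1, Szero2, ContinuousLinearMap.zero_apply]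
      at P1 P2 P3 P4 Qe1 Qv Qw QY QZ
    norm_num at P1 P2 P3 P4 Qe1 Qv Qw QY QZ
    nlinarith [P1, P2, P3, P4, Qe1, Qv, Qw, QY, QZ, hp1]
  -- Step 2 : differentiability of h and S in the point
  have comb : ∀ s₀ : ℝ, s₀ ∈ Set.Ioo 0 (Real.pi/2) → ∀ (m : F) (Y Z : F), DifferentiableAt ℝ
      (fun x => Real.sin s₀^2 * (h x Y Z - S x Y Z) + (1 - Real.sin s₀^2) * S x Y Z) m := by
    intro s₀ hs₀ m Y Z
    have hι : DifferentiableAt ℝ (fun x : F => (((1:ℝ), ((s₀:ℝ), x)) : ℝ × (ℝ × F))) m :=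
      (differentiableAt_const _).prodMk ((differentiableAt_const _).prodMk differentiableAt_id)
    have hcomp := (hGdiff ((1:ℝ),((s₀:ℝ),m)) one_pos hs₀ Y Z).comp m hι
    have Efun : ((fun y : ℝ × (ℝ × F) => coneMetric gM y ((0:ℝ),((0:ℝ),Y)) ((0:ℝ),((0:ℝ),Z)))
          ∘ (fun x : F => (((1:ℝ),((s₀:ℝ),x)) : ℝ × (ℝ × F))))
        = fun x => Real.sin s₀^2 * (h x Y Z - S x Y Z) + (1 - Real.sin s₀^2) * S x Y Z := by
      funext x
      simp only [Function.comp, coneMetric, hgM]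
      rw [Real.cos_sq']
      ring
    rwa [Efun] at hcomp
  have pi_pos := Real.pi_pos
  have hsq6 : Real.sin (Real.pi/6)^2 = 1/4 := by
    rw [Real.sin_pi_div_six]; norm_num
  have hsq3 : Real.sin (Real.pi/3)^2 = 3/4 := by
    rw [Real.sin_pi_div_three, div_pow, Real.sq_sqrt] <;> norm_num
  have hmem6 : Real.pi/6 ∈ Set.Ioo 0 (Real.pi/2) := ⟨by linarith, by linarith⟩
  have hmem3 : Real.pi/3 ∈ Set.Ioo 0 (Real.pi/2) := ⟨by linarith, by linarith⟩
  have hdh : ∀ (m : F) (Y Z : F), DifferentiableAt ℝ (fun x => h x Y Z) m := by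
    intro m Y Z
    have c1 := comb _ hmem6 m Y Z
    have c2 := comb _ hmem3 m Y Z
    rw [hsq6] at c1
    rw [hsq3] at c2
    have hadd := c1.add c2
    have E : (fun x => ((1:ℝ)/4 * (h x Y Z - S x Y Z) + (1 - 1/4) * S x Y Z)
        + ((3:ℝ)/4 * (h x Y Z - S x Y Z) + (1 - 3/4) * S x Y Z)) = fun x => h x Y Z := by
      funext x; ring
    rw [← E]; exact hadd
  have hdS : ∀ (m : F) (Y Z : F), DifferentiableAt ℝ (fun x => S x Y Z) m := by
    intro m Y Z
    have c1 := comb _ hmem6 m Y Z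
    rw [hsq6] at c1
    have hsub := (c1.const_mul 2).sub ((hdh m Y Z).const_mul (1/2))
    have E : (fun x => 2 * ((1:ℝ)/4 * (h x Y Z - S x Y Z) + (1 - 1/4) * S x Y Z)
        - 1/2 * h x Y Z) = fun x => S x Y Z := by
      funext x; ring
    rw [← E]; exact hsub
  -- Step 3 : explicit derivative of the cone metric in constant directions
  have Dcalc : ∀ (p α β γ : ℝ × (ℝ × F)),
      fderiv ℝ (fun y => coneMetric gM y β γ) p α =
        2*p.1*α.1*(β.2.1*γ.2.1
            + Real.sin p.2.1^2*(h p.2.2 β.2.2 γ.2.2 - S p.2.2 β.2.2 γ.2.2)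
            + Real.cos p.2.1^2 * S p.2.2 β.2.2 γ.2.2)
        + p.1^2*α.2.1*(2*Real.sin p.2.1*Real.cos p.2.1
              *(h p.2.2 β.2.2 γ.2.2 - S p.2.2 β.2.2 γ.2.2)
            - 2*Real.sin p.2.1*Real.cos p.2.1 * S p.2.2 β.2.2 γ.2.2)
        + p.1^2*( Real.sin p.2.1^2*(h p.2.2 (ΓN p.2.2 α.2.2 β.2.2) γ.2.2
                - S p.2.2 (ΓN p.2.2 α.2.2 β.2.2) γ.2.2)
            + Real.cos p.2.1^2 * S p.2.2 (ΓN p.2.2 α.2.2 β.2.2) γ.2.2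
            + Real.sin p.2.1^2*(h p.2.2 β.2.2 (ΓN p.2.2 α.2.2 γ.2.2)
                - S p.2.2 β.2.2 (ΓN p.2.2 α.2.2 γ.2.2))
            + Real.cos p.2.1^2 * S p.2.2 β.2.2 (ΓN p.2.2 α.2.2 γ.2.2)) := by
    intro p α β γ
    have Efun : (fun y : ℝ × (ℝ × F) => coneMetric gM y β γ)
        = fun y => β.1*γ.1 + y.1^2 * (β.2.1*γ.2.1
            + Real.sin y.2.1^2*(h y.2.2 β.2.2 γ.2.2 - S y.2.2 β.2.2 γ.2.2)
            + Real.cos y.2.1^2 * S y.2.2 β.2.2 γ.2.2) := by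
      funext y; simp [coneMetric, hgM]
    rw [Efun]
    have ha : HasDerivAt (fun t : ℝ => p.1 + t * α.1) α.1 0 := by
      simpa using ((hasDerivAt_id (0:ℝ)).mul_const α.1).const_add p.1
    have hb : HasDerivAt (fun t : ℝ => p.2.1 + t * α.2.1) α.2.1 0 := by
      simpa using ((hasDerivAt_id (0:ℝ)).mul_const α.2.1).const_add p.2.1
    have hline : HasDerivAt (fun t : ℝ => p.2.2 + t • α.2.2) α.2.2 0 := by
      simpa using ((hasDerivAt_id (0:ℝ)).smul_const α.2.2).const_add p.2.2
    have hsin : HasDerivAt (fun t : ℝ => Real.sin (p.2.1 + t * α.2.1))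
        (Real.cos p.2.1 * α.2.1) 0 := by
      simpa [Function.comp_def] using (Real.hasDerivAt_sin (p.2.1 + 0 * α.2.1)).comp 0 hb
    have hcos : HasDerivAt (fun t : ℝ => Real.cos (p.2.1 + t * α.2.1))
        (-Real.sin p.2.1 * α.2.1) 0 := by
      simpa [Function.comp_def] using (Real.hasDerivAt_cos (p.2.1 + 0 * α.2.1)).comp 0 hb
    have hh1 : HasDerivAt (fun t : ℝ => h (p.2.2 + t • α.2.2) β.2.2 γ.2.2)
        (h p.2.2 (ΓN p.2.2 α.2.2 β.2.2) γ.2.2 + h p.2.2 β.2.2 (ΓN p.2.2 α.2.2 γ.2.2)) 0 := by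
      have hd : HasFDerivAt (fun x => h x β.2.2 γ.2.2)
          (fderiv ℝ (fun x => h x β.2.2 γ.2.2) p.2.2) ((fun t : ℝ => p.2.2 + t • α.2.2) 0) := by
        simpa using (hdh p.2.2 β.2.2 γ.2.2).hasFDerivAt
      have hc := hd.comp_hasDerivAt 0 hline
      simp only [Function.comp_def] at hc
      rwa [hΓN.2 p.2.2 trivial α.2.2 β.2.2 γ.2.2] at hc
    have hSder : fderiv ℝ (fun x => S x β.2.2 γ.2.2) p.2.2 α.2.2
        = S p.2.2 (ΓN p.2.2 α.2.2 β.2.2) γ.2.2 + S p.2.2 β.2.2 (ΓN p.2.2 α.2.2 γ.2.2) := by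
      have := hSpar p.2.2 α.2.2 β.2.2 γ.2.2
      simp only [covTen] at this
      linarith
    have hS1 : HasDerivAt (fun t : ℝ => S (p.2.2 + t • α.2.2) β.2.2 γ.2.2)
        (S p.2.2 (ΓN p.2.2 α.2.2 β.2.2) γ.2.2 + S p.2.2 β.2.2 (ΓN p.2.2 α.2.2 γ.2.2)) 0 := by
      have hd : HasFDerivAt (fun x => S x β.2.2 γ.2.2)
          (fderiv ℝ (fun x => S x β.2.2 γ.2.2) p.2.2) ((fun t : ℝ => p.2.2 + t • α.2.2) 0) := by
        simpa using (hdS p.2.2 β.2.2 γ.2.2).hasFDerivAt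
      have hc := hd.comp_hasDerivAt 0 hline
      simp only [Function.comp_def] at hc
      rwa [hSder] at hc
    have Dfull : DifferentiableAt ℝ (fun y : ℝ × (ℝ × F) => β.1*γ.1 + y.1^2 * (β.2.1*γ.2.1
            + Real.sin y.2.1^2*(h y.2.2 β.2.2 γ.2.2 - S y.2.2 β.2.2 γ.2.2)
            + Real.cos y.2.1^2 * S y.2.2 β.2.2 γ.2.2)) p := by
      have dsin : DifferentiableAt ℝ (fun y : ℝ × (ℝ × F) => Real.sin y.2.1) p :=
        (Real.differentiable_sin.differentiableAt).comp p (differentiableAt_snd.fst)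
      have dcos : DifferentiableAt ℝ (fun y : ℝ × (ℝ × F) => Real.cos y.2.1) p :=
        (Real.differentiable_cos.differentiableAt).comp p (differentiableAt_snd.fst)
      have dh2 : DifferentiableAt ℝ (fun y : ℝ × (ℝ × F) => h y.2.2 β.2.2 γ.2.2) p :=
        (hdh p.2.2 β.2.2 γ.2.2).comp p (differentiableAt_snd.snd)
      have dS2 : DifferentiableAt ℝ (fun y : ℝ × (ℝ × F) => S y.2.2 β.2.2 γ.2.2) p :=
        (hdS p.2.2 β.2.2 γ.2.2).comp p (differentiableAt_snd.snd)
      exact (differentiableAt_const _).add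
        (((differentiableAt_fst.pow 2)).mul
          (((differentiableAt_const _).add (((dsin.pow 2)).mul (dh2.sub dS2))).add
            ((dcos.pow 2).mul dS2)))
    have hbig := (((ha.pow 2).mul
        ((((hsin.pow 2).mul (hh1.sub hS1)).const_add (β.2.1*γ.2.1)).add
          ((hcos.pow 2).mul hS1))).const_add (β.1*γ.1))
    have hval := dirderiv _ p α _ Dfull (by
      have E1d : (fun t : ℝ => β.1*γ.1 + ((p + t • α).1)^2 * (β.2.1*γ.2.1
            + Real.sin ((p + t • α).2.1)^2
              * (h ((p + t • α).2.2) β.2.2 γ.2.2 - S ((p + t • α).2.2) β.2.2 γ.2.2)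
            + Real.cos ((p + t • α).2.1)^2 * S ((p + t • α).2.2) β.2.2 γ.2.2))
          = fun t : ℝ => β.1*γ.1 + (p.1 + t * α.1)^2 * (β.2.1*γ.2.1
            + Real.sin (p.2.1 + t * α.2.1)^2
              * (h (p.2.2 + t • α.2.2) β.2.2 γ.2.2 - S (p.2.2 + t • α.2.2) β.2.2 γ.2.2)
            + Real.cos (p.2.1 + t * α.2.1)^2 * S (p.2.2 + t • α.2.2) β.2.2 γ.2.2) := by
        funext t
        simp [Prod.fst_add, Prod.snd_add, Prod.smul_fst, Prod.smul_snd, smul_eq_mul]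
      rw [E1d]
      exact hbig)
    rw [hval]
    norm_num
    ring
  -- Step 4 : derivative of the candidate tensor T
  have VT : ∀ (p u v w : ℝ × (ℝ × F)),
      fderiv ℝ (fun y : ℝ × (ℝ × F) => Tcone S y v w) p u =
        (-(v.1*Real.sin p.2.1*u.2.1)
            - (u.1*Real.sin p.2.1 + p.1*Real.cos p.2.1*u.2.1)*v.2.1)
          * (w.1*Real.cos p.2.1 - p.1*Real.sin p.2.1*w.2.1)
        + (v.1*Real.cos p.2.1 - p.1*Real.sin p.2.1*v.2.1)
          * (-(w.1*Real.sin p.2.1*u.2.1)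
            - (u.1*Real.sin p.2.1 + p.1*Real.cos p.2.1*u.2.1)*w.2.1)
        + 2*(p.1*Real.cos p.2.1)*(u.1*Real.cos p.2.1 - p.1*Real.sin p.2.1*u.2.1)
            * S p.2.2 v.2.2 w.2.2
        + (p.1*Real.cos p.2.1)^2 * (S p.2.2 (ΓN p.2.2 u.2.2 v.2.2) w.2.2
            + S p.2.2 v.2.2 (ΓN p.2.2 u.2.2 w.2.2)) := by
    intro p u v w
    have ha : HasDerivAt (fun t : ℝ => p.1 + t * u.1) u.1 0 := by
      simpa using ((hasDerivAt_id (0:ℝ)).mul_const u.1).const_add p.1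
    have hb : HasDerivAt (fun t : ℝ => p.2.1 + t * u.2.1) u.2.1 0 := by
      simpa using ((hasDerivAt_id (0:ℝ)).mul_const u.2.1).const_add p.2.1
    have hline : HasDerivAt (fun t : ℝ => p.2.2 + t • u.2.2) u.2.2 0 := by
      simpa using ((hasDerivAt_id (0:ℝ)).smul_const u.2.2).const_add p.2.2
    have hsin : HasDerivAt (fun t : ℝ => Real.sin (p.2.1 + t * u.2.1))
        (Real.cos p.2.1 * u.2.1) 0 := by
      simpa [Function.comp_def] using (Real.hasDerivAt_sin (p.2.1 + 0 * u.2.1)).comp 0 hb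
    have hcos : HasDerivAt (fun t : ℝ => Real.cos (p.2.1 + t * u.2.1))
        (-Real.sin p.2.1 * u.2.1) 0 := by
      simpa [Function.comp_def] using (Real.hasDerivAt_cos (p.2.1 + 0 * u.2.1)).comp 0 hb
    have hSder : fderiv ℝ (fun x => S x v.2.2 w.2.2) p.2.2 u.2.2
        = S p.2.2 (ΓN p.2.2 u.2.2 v.2.2) w.2.2 + S p.2.2 v.2.2 (ΓN p.2.2 u.2.2 w.2.2) := by
      have := hSpar p.2.2 u.2.2 v.2.2 w.2.2
      simp only [covTen] at this
      linarith
    have hS1 : HasDerivAt (fun t : ℝ => S (p.2.2 + t • u.2.2) v.2.2 w.2.2)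
        (S p.2.2 (ΓN p.2.2 u.2.2 v.2.2) w.2.2 + S p.2.2 v.2.2 (ΓN p.2.2 u.2.2 w.2.2)) 0 := by
      have hd : HasFDerivAt (fun x => S x v.2.2 w.2.2)
          (fderiv ℝ (fun x => S x v.2.2 w.2.2) p.2.2) ((fun t : ℝ => p.2.2 + t • u.2.2) 0) := by
        simpa using (hdS p.2.2 v.2.2 w.2.2).hasFDerivAt
      have hc := hd.comp_hasDerivAt 0 hline
      simp only [Function.comp_def] at hc
      rwa [hSder] at hc
    have Dfull : DifferentiableAt ℝ (fun y : ℝ × (ℝ × F) =>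
        (v.1*Real.cos y.2.1 - y.1*Real.sin y.2.1*v.2.1)
          * (w.1*Real.cos y.2.1 - y.1*Real.sin y.2.1*w.2.1)
        + (y.1*Real.cos y.2.1)^2 * S y.2.2 v.2.2 w.2.2) p := by
      have dsin : DifferentiableAt ℝ (fun y : ℝ × (ℝ × F) => Real.sin y.2.1) p :=
        (Real.differentiable_sin.differentiableAt).comp p (differentiableAt_snd.fst)
      have dcos : DifferentiableAt ℝ (fun y : ℝ × (ℝ × F) => Real.cos y.2.1) p :=
        (Real.differentiable_cos.differentiableAt).comp p (differentiableAt_snd.fst)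
      have dS2 : DifferentiableAt ℝ (fun y : ℝ × (ℝ × F) => S y.2.2 v.2.2 w.2.2) p :=
        (hdS p.2.2 v.2.2 w.2.2).comp p (differentiableAt_snd.snd)
      exact (((dcos.const_mul v.1).sub ((differentiableAt_fst.mul dsin).mul_const v.2.1)).mul
          ((dcos.const_mul w.1).sub ((differentiableAt_fst.mul dsin).mul_const w.2.1))).add
        (((differentiableAt_fst.mul dcos).pow 2).mul dS2)
    have hQv := (hcos.const_mul v.1).sub ((ha.mul hsin).mul_const v.2.1)
    have hQw := (hcos.const_mul w.1).sub ((ha.mul hsin).mul_const w.2.1)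
    have hbig := (hQv.mul hQw).add (((ha.mul hcos).pow 2).mul hS1)
    have Efun : (fun y : ℝ × (ℝ × F) => Tcone S y v w)
        = fun y : ℝ × (ℝ × F) =>
          (v.1*Real.cos y.2.1 - y.1*Real.sin y.2.1*v.2.1)
            * (w.1*Real.cos y.2.1 - y.1*Real.sin y.2.1*w.2.1)
          + (y.1*Real.cos y.2.1)^2 * S y.2.2 v.2.2 w.2.2 := rfl
    rw [Efun]
    have hval := dirderiv _ p u _ Dfull (by
      have E1d : (fun t : ℝ =>
          (v.1*Real.cos ((p + t • u).2.1) - ((p + t • u).1)*Real.sin ((p + t • u).2.1)*v.2.1)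
            * (w.1*Real.cos ((p + t • u).2.1)
                - ((p + t • u).1)*Real.sin ((p + t • u).2.1)*w.2.1)
          + (((p + t • u).1)*Real.cos ((p + t • u).2.1))^2
              * S ((p + t • u).2.2) v.2.2 w.2.2)
          = fun t : ℝ =>
          (v.1*Real.cos (p.2.1 + t * u.2.1)
              - (p.1 + t * u.1)*Real.sin (p.2.1 + t * u.2.1)*v.2.1)
            * (w.1*Real.cos (p.2.1 + t * u.2.1)
                - (p.1 + t * u.1)*Real.sin (p.2.1 + t * u.2.1)*w.2.1)
          + ((p.1 + t * u.1)*Real.cos (p.2.1 + t * u.2.1))^2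
              * S (p.2.2 + t • u.2.2) v.2.2 w.2.2 := by
        funext t
        simp [Prod.fst_add, Prod.snd_add, Prod.smul_fst, Prod.smul_snd, smul_eq_mul]
      rw [E1d]
      exact hbig)
    rw [hval]
    norm_num
    ring
  -- Step 5 : metric symmetry and the Koszul identity
  have gsym : ∀ (q x y : ℝ × (ℝ × F)), coneMetric gM q x y = coneMetric gM q y x := by
    intro q x y
    simp only [coneMetric, hgM]
    rw [hsym q.2.2 x.2.2 y.2.2, hSsym q.2.2 x.2.2 y.2.2]
    ring
  have Koszul : ∀ p : ℝ × (ℝ × F), 0 < p.1 → p.2.1 ∈ Set.Ioo 0 (Real.pi/2) →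
      ∀ u v z : ℝ × (ℝ × F),
      2 * coneMetric gM p (Γc p u v) z
        = fderiv ℝ (fun y => coneMetric gM y v z) p u
          + fderiv ℝ (fun y => coneMetric gM y u z) p v
          - fderiv ℝ (fun y => coneMetric gM y u v) p z := by
    intro p hp1 hp2 u v z
    rw [hΓc.2 p ⟨hp1, hp2⟩ u v z, hΓc.2 p ⟨hp1, hp2⟩ v u z, hΓc.2 p ⟨hp1, hp2⟩ z u v]
    rw [hΓc.1 p ⟨hp1, hp2⟩ v u, hΓc.1 p ⟨hp1, hp2⟩ z u, hΓc.1 p ⟨hp1, hp2⟩ z v]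
    rw [gsym p (Γc p u z) v]
    ring
  
  -- Step 6 : properties of the tensor T
  have hTg : ∀ (p u v : ℝ × (ℝ × F)), Tcone S p u v = coneMetric gM p u (TendC Send p v) := by
    intro p u v
    simp only [Tcone, TendC, coneMetric, hgM, hSend2, SSend2]
    by_cases hp : p.1 = 0
    · rw [hp]; ring
    · field_simp
      ring
  have hTsym : ∀ (p u v : ℝ × (ℝ × F)), Tcone S p u v = Tcone S p v u := by
    intro p u v
    simp only [Tcone]
    rw [hSsym p.2.2 u.2.2 v.2.2]
    ring
  have hpar : ∀ p : ℝ × (ℝ × F), 0 < p.1 → p.2.1 ∈ Set.Ioo 0 (Real.pi / 2) →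
      ∀ u v w, covTen Γc (Tcone S) p u v w = 0 := by
    intro p hr hs u v w
    have hr' : p.1 ≠ 0 := ne_of_gt hr
    simp only [covTen]
    rw [VT p u v w]
    rw [hTg p (Γc p u v) w]
    rw [hTsym p v (Γc p u w), hTg p (Γc p u w) v]
    have hKw := Koszul p hr hs u v (TendC Send p w)
    have hKv := Koszul p hr hs u w (TendC Send p v)
    rw [Dcalc p u v (TendC Send p w), Dcalc p v u (TendC Send p w),
        Dcalc p (TendC Send p w) u v] at hKw
    rw [Dcalc p u w (TendC Send p v), Dcalc p w u (TendC Send p v),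
        Dcalc p (TendC Send p v) u w] at hKv
    simp only [TendC] at hKw hKv ⊢
    simp only [hSend2, SSend2] at hKw hKv
    rw [hΓNsym p.2.2 (Send p.2.2 w.2.2) u.2.2, hΓNsym p.2.2 (Send p.2.2 w.2.2) v.2.2,
        hsym p.2.2 (ΓN p.2.2 u.2.2 (Send p.2.2 w.2.2)) v.2.2,
        hSsym p.2.2 (ΓN p.2.2 u.2.2 (Send p.2.2 w.2.2)) v.2.2,
        hΓNsym p.2.2 v.2.2 u.2.2] at hKw
    rw [hΓNsym p.2.2 (Send p.2.2 v.2.2) u.2.2, hΓNsym p.2.2 (Send p.2.2 v.2.2) w.2.2,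
        hsym p.2.2 (ΓN p.2.2 u.2.2 (Send p.2.2 v.2.2)) w.2.2,
        hSsym p.2.2 (ΓN p.2.2 u.2.2 (Send p.2.2 v.2.2)) w.2.2,
        hΓNsym p.2.2 w.2.2 u.2.2,
        hSsym p.2.2 (ΓN p.2.2 u.2.2 w.2.2) v.2.2,
        hSsym p.2.2 w.2.2 v.2.2] at hKv
    have hfw : p.1 * (-(Real.sin p.2.1 * (w.1*Real.cos p.2.1 - p.1*Real.sin p.2.1*w.2.1)) / p.1)
        = -(Real.sin p.2.1 * (w.1*Real.cos p.2.1 - p.1*Real.sin p.2.1*w.2.1)) := by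
      field_simp
    have hfv : p.1 * (-(Real.sin p.2.1 * (v.1*Real.cos p.2.1 - p.1*Real.sin p.2.1*v.2.1)) / p.1)
        = -(Real.sin p.2.1 * (v.1*Real.cos p.2.1 - p.1*Real.sin p.2.1*v.2.1)) := by
      field_simp
    linear_combination (-1/2 : ℝ)*hKw + (-1/2 : ℝ)*hKv
      + (-(u.1*v.2.1 + v.1*u.2.1) + (1/2)*p.1*(2*Real.sin p.2.1*Real.cos p.2.1
          *(h p.2.2 u.2.2 v.2.2 - S p.2.2 u.2.2 v.2.2)
          - 2*Real.sin p.2.1*Real.cos p.2.1 * S p.2.2 u.2.2 v.2.2))*hfw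
      + (-(u.1*w.2.1 + w.1*u.2.1) + (1/2)*p.1*(2*Real.sin p.2.1*Real.cos p.2.1
          *(h p.2.2 u.2.2 w.2.2 - S p.2.2 u.2.2 w.2.2)
          - 2*Real.sin p.2.1*Real.cos p.2.1 * S p.2.2 u.2.2 w.2.2))*hfv
      + (p.1*Real.cos p.2.1*(w.1*Real.cos p.2.1 - p.1*Real.sin p.2.1*w.2.1)*S p.2.2 u.2.2 v.2.2
        + p.1*Real.cos p.2.1*(v.1*Real.cos p.2.1 - p.1*Real.sin p.2.1*v.2.1)*S p.2.2 u.2.2 w.2.2)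
        *(hpy p.2.1)
  refine ⟨Tcone S, TendC Send, hTg, hTsym, ?_, hpar, ?_, ?_⟩
  · -- non-triviality
    refine ⟨((1:ℝ), (Real.pi/4, (0:F))), ⟨one_pos, ⟨by positivity, by
        linarith [Real.pi_pos]⟩⟩, ((1:ℝ), (0:ℝ×F)), ((1:ℝ), (0:ℝ×F)), ?_⟩
    simp only [Tcone]
    norm_num [Szero2, Real.cos_pi_div_four]
  · -- projection property
    intro p hr hs u
    have hr' : p.1 ≠ 0 := ne_of_gt hr
    have hQ : (TendC Send p u).1 * Real.cos p.2.1
        - p.1 * Real.sin p.2.1 * (TendC Send p u).2.1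
        = u.1*Real.cos p.2.1 - p.1*Real.sin p.2.1*u.2.1 := by
      simp only [TendC]
      field_simp
      linear_combination (u.1*Real.cos p.2.1 - p.1*Real.sin p.2.1*u.2.1) * hpy p.2.1
    have h22 : (TendC Send p u).2.2 = Send p.2.2 u.2.2 := rfl
    show (_, (_, _)) = (_, (_, _))
    rw [Prod.ext_iff, Prod.ext_iff]
    refine ⟨?_, ?_, ?_⟩
    · show Real.cos p.2.1 * ((TendC Send p u).1 * Real.cos p.2.1
        - p.1 * Real.sin p.2.1 * (TendC Send p u).2.1) = _
      rw [hQ]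
    · show -(Real.sin p.2.1 * ((TendC Send p u).1 * Real.cos p.2.1
        - p.1 * Real.sin p.2.1 * (TendC Send p u).2.1)) / p.1 = _
      rw [hQ]
    · show Send p.2.2 (TendC Send p u).2.2 = _
      rw [h22, hS2]
  · -- the Obata function
    intro p hr hs
    simp only [Tcone]
    norm_num [Szero2]
    ring
end
end
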